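/- arXiv:2006.11334 — 5 statements merged into one kernel-verified Lean document; each statement's English description precedes it below -/
import Mathlib

section
/- Let G be a simple graph on a countable vertex set. If G has a perfect matching, then G satisfies condition (A). -/
namespace PaperMatchings

variable {V : Type*}

/-- The support of a set of edges: all vertices incident to some edge in `M`. -/
def supp (M : Set (Sym2 V)) : Set V := {v | ∃ e ∈ M, v ∈ e}

/-- `M` is a matching of `G`: a set of edges of `G` such that no vertex is
incident to more than one edge of `M`. -/
def IsMatching (G : SimpleGraph V) (M : Set (Sym2 V)) : Prop :=
  M ⊆ G.edgeSet ∧ ∀ (v : V), ∀ e ∈ M, ∀ e' ∈ M, v ∈ e → v ∈ e' → e = e'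

/-- A perfect matching: a matching whose support is all of `V`. -/
def IsPerfectMatching (G : SimpleGraph V) (M : Set (Sym2 V)) : Prop :=
  IsMatching G M ∧ supp M = Set.univ

/-- A (finite or infinite) path in `G`, given by its number of vertices `n : ℕ∞`
(`⊤` meaning infinite) and the enumeration `f` of its vertices: it is injective on
indices below `n` and consecutive vertices are adjacent. -/
def IsPath (G : SimpleGraph V) (n : ℕ∞) (f : ℕ → V) : Prop :=
  1 ≤ n ∧
  (∀ i j : ℕ, (i : ℕ∞) < n → (j : ℕ∞) < n → f i = f j → i = j) ∧
  (∀ i : ℕ, ((i : ℕ∞) + 1) < n → G.Adj (f i) (f (i + 1)))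

/-- The consecutive edges of the path lie alternately in `M` and outside `M`. -/
def IsAlternating (M : Set (Sym2 V)) (n : ℕ∞) (f : ℕ → V) : Prop :=
  ∀ i : ℕ, ((i : ℕ∞) + 2) < n →
    (s(f i, f (i + 1)) ∈ M ↔ s(f (i + 1), f (i + 2)) ∉ M)

/-- An `M`-augmenting path starting at `s`: an `M`-alternating path (with at least one
edge) starting at the unmatched vertex `s`, which is either infinite or ends at an
unmatched vertex. -/
def IsAugmentingPath (G : SimpleGraph V) (M : Set (Sym2 V)) (n : ℕ∞) (f : ℕ → V)
    (s : V) : Prop :=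
  IsPath G n f ∧ IsAlternating M n f ∧ 1 < n ∧ f 0 = s ∧ s ∉ supp M ∧
  ∀ k : ℕ, n = (k : ℕ∞) + 1 → f k ∉ supp M

/-- The path contains at least one edge of `M`. -/
def IsProper (M : Set (Sym2 V)) (n : ℕ∞) (f : ℕ → V) : Prop :=
  ∃ i : ℕ, ((i : ℕ∞) + 1) < n ∧ s(f i, f (i + 1)) ∈ M

/-- Condition (A): for every matching `M` and every vertex `s` not in the support
of `M` there is an `M`-augmenting path starting at `s`. -/
def ConditionA (G : SimpleGraph V) : Prop :=
  ∀ M : Set (Sym2 V), IsMatching G M → ∀ s : V, s ∉ supp M →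
    ∃ (n : ℕ∞) (f : ℕ → V), IsAugmentingPath G M n f s

/-- An independent matching: a matching admitting no proper augmenting path. -/
def IndepMatching (G : SimpleGraph V) (M : Set (Sym2 V)) : Prop :=
  IsMatching G M ∧
    ¬ ∃ (s : V) (n : ℕ∞) (f : ℕ → V), IsAugmentingPath G M n f s ∧ IsProper M n f

/-- The induced subgraph of `G` on the vertex set `S` (vertices outside `S`
become isolated). -/
def restrict (G : SimpleGraph V) (S : Set V) : SimpleGraph V where
  Adj u v := G.Adj u v ∧ u ∈ S ∧ v ∈ S
  symm := by
    constructor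
    intro u v h
    exact ⟨h.1.symm, h.2.2, h.2.1⟩
  loopless := by
    constructor
    intro v h
    exact G.irrefl h.1

/-- `W` is an independent subgraph of `G`: the induced subgraph `G[W]` has a perfect
matching (i.e. `G` has a matching with support exactly `W`) and every such matching
is an independent matching of `G`. -/
def IndepSubgraph (G : SimpleGraph V) (W : Set V) : Prop :=
  (∃ M, IsMatching G M ∧ supp M = W) ∧
  ∀ M, IsMatching G M → supp M = W → IndepMatching G M

/-- The induced subgraph `G[W]` satisfies condition (A): for every matching of
`G[W]` and every vertex of `W` not in its support, there is an augmenting path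
inside `G[W]`. -/
def ConditionAOn (G : SimpleGraph V) (W : Set V) : Prop :=
  ∀ M : Set (Sym2 V), IsMatching (restrict G W) M → ∀ s ∈ W, s ∉ supp M →
    ∃ (n : ℕ∞) (f : ℕ → V), IsAugmentingPath (restrict G W) M n f s


lemma mem_supp_iff' {M : Set (Sym2 V)} {v : V} : v ∈ supp M ↔ ∃ w, s(v, w) ∈ M := by
  constructor
  · rintro ⟨e, heM, hv⟩
    exact ⟨Sym2.Mem.other hv, by rwa [Sym2.other_spec hv]⟩
  · rintro ⟨w, hw⟩
    exact ⟨_, hw, Sym2.mem_mk_left v w⟩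

lemma IsMatching.uniq {G : SimpleGraph V} {M : Set (Sym2 V)} (hM : IsMatching G M)
    {a b c : V} (h1 : s(a, b) ∈ M) (h2 : s(a, c) ∈ M) : b = c := by
  have h := hM.2 a _ h1 _ h2 (Sym2.mem_mk_left a b) (Sym2.mem_mk_left a c)
  rw [Sym2.eq_iff] at h
  rcases h with ⟨-, h⟩ | ⟨h1', h2'⟩
  · exact h
  · exact h2'.trans h1'

lemma IsMatching.ne {G : SimpleGraph V} {M : Set (Sym2 V)} (hM : IsMatching G M)
    {a b : V} (h1 : s(a, b) ∈ M) : a ≠ b :=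
  (G.mem_edgeSet.mp (hM.1 h1)).ne

/-- Auxiliary sequence: start at `s`, then alternately apply `g` and `h`. -/
def altSeq (s : V) (g h : V → V) : ℕ → V
  | 0 => s
  | k + 1 => if k % 2 = 0 then g (altSeq s g h k) else h (altSeq s g h k)

lemma altSeq_odd (s : V) (g h : V → V) (k : ℕ) :
    altSeq s g h (2 * k + 1) = g (altSeq s g h (2 * k)) := by
  simp [altSeq, Nat.mul_mod_right]

lemma altSeq_even (s : V) (g h : V → V) (k : ℕ) :
    altSeq s g h (2 * k + 2) = h (altSeq s g h (2 * k + 1)) := by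
  have h2 : (2 * k + 1) % 2 = 1 := by omega
  simp [altSeq, h2]

/-- If a simple graph on a countable vertex set has a perfect matching,
then it satisfies condition (A). -/
theorem conditionA_of_perfect_matching {V : Type*} [Countable V] (G : SimpleGraph V)
    (h : ∃ M : Set (Sym2 V), IsPerfectMatching G M) : ConditionA G := by
  obtain ⟨N, hN, hNsupp⟩ := h
  intro M hM s hs
  -- mates in N (total, since N is perfect) and in M (total with junk default)
  have hnm_ex : ∀ v : V, ∃ w, s(v, w) ∈ N := fun v =>
    mem_supp_iff'.mp (hNsupp ▸ Set.mem_univ v)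
  choose nmate hnmate using hnm_ex
  have hmm_ex : ∀ v : V, ∃ w, v ∈ supp M → s(v, w) ∈ M := by
    intro v
    by_cases hv : v ∈ supp M
    · obtain ⟨w, hw⟩ := mem_supp_iff'.mp hv
      exact ⟨w, fun _ => hw⟩
    · exact ⟨v, fun h' => absurd h' hv⟩
  choose mmate hmmate using hmm_ex
  set f : ℕ → V := altSeq s nmate mmate with hf
  have hf0 : f 0 = s := rfl
  have hfodd : ∀ k, f (2 * k + 1) = nmate (f (2 * k)) := fun k => altSeq_odd ..
  have hfeven : ∀ k, f (2 * k + 2) = mmate (f (2 * k + 1)) := fun k => altSeq_even ..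
  have hNe : ∀ k, s(f (2 * k), f (2 * k + 1)) ∈ N := by
    intro k; rw [hfodd]; exact hnmate _
  have hMe : ∀ k, f (2 * k + 1) ∈ supp M → s(f (2 * k + 1), f (2 * k + 2)) ∈ M := by
    intro k hk; rw [hfeven]; exact hmmate _ hk
  -- choose the length
  obtain ⟨n, h2n, hGood, hCont, hEnd⟩ :
      ∃ n : ℕ∞, 2 ≤ n ∧
        (∀ k : ℕ, ((2 * k + 2 : ℕ) : ℕ∞) < n → f (2 * k + 1) ∈ supp M) ∧
        (∀ k : ℕ, ((2 * k + 1 : ℕ) : ℕ∞) < n → f (2 * k + 1) ∈ supp M →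
          ((2 * k + 2 : ℕ) : ℕ∞) < n) ∧
        (∀ k : ℕ, n = (k : ℕ∞) + 1 → f k ∉ supp M) := by
    by_cases hD : ∃ m : ℕ, f (2 * m + 1) ∉ supp M
    · classical
      refine ⟨((2 * Nat.find hD + 2 : ℕ) : ℕ∞), ?_, ?_, ?_, ?_⟩
      · exact_mod_cast Nat.le_add_left 2 (2 * Nat.find hD)
      · intro k hk
        rw [Nat.cast_lt] at hk
        have : k < Nat.find hD := by omega
        have := Nat.find_min hD this
        simpa using this
      · intro k hk hsupp
        rw [Nat.cast_lt] at hk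
        have hkL : k ≤ Nat.find hD := by omega
        have hne : k ≠ Nat.find hD := by
          intro h'; exact (h' ▸ Nat.find_spec hD) hsupp
        rw [Nat.cast_lt]; omega
      · intro k hk
        have : ((2 * Nat.find hD + 2 : ℕ) : ℕ∞) = ((k + 1 : ℕ) : ℕ∞) := by
          rw [hk]; push_cast; ring
        rw [Nat.cast_inj] at this
        have : k = 2 * Nat.find hD + 1 := by omega
        rw [this]
        exact Nat.find_spec hD
    · push_neg at hD
      refine ⟨⊤, le_top, fun k _ => hD k, fun k _ _ => by
        exact_mod_cast WithTop.coe_lt_top (2 * k + 2 : ℕ), fun k hk => ?_⟩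
      have h' : ((k : ℕ∞) + 1) = ((k + 1 : ℕ) : ℕ∞) := by push_cast; ring
      rw [h'] at hk
      exact absurd hk.symm (WithTop.natCast_ne_top _)
  -- basic uniqueness facts
  have hMsupp : ∀ a b : V, s(a, b) ∈ M → a ∈ supp M := fun a b hab =>
    mem_supp_iff'.mpr ⟨b, hab⟩
  -- injectivity on indices below n
  have hlt_of_lt : ∀ i j : ℕ, i ≤ j → (j : ℕ∞) < n → (i : ℕ∞) < n := by
    intro i j hij hj
    exact lt_of_le_of_lt (by exact_mod_cast hij) hj
  have hinj : ∀ j : ℕ, (j : ℕ∞) < n → ∀ i : ℕ, i < j → f i ≠ f j := by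
    intro j
    induction j using Nat.strong_induction_on with
    | _ j IH =>
    intro hjn i hij hEq
    rcases Nat.even_or_odd' j with ⟨b, hb | hb⟩
    · -- j = 2*b, b ≥ 1
      have hb1 : 1 ≤ b := by omega
      have hsb : f (2 * (b - 1) + 1) ∈ supp M := by
        apply hGood
        have : 2 * (b - 1) + 2 = j := by omega
        rw [this]; exact hjn
      have hMj : s(f (2 * (b - 1) + 1), f (2 * (b - 1) + 2)) ∈ M := hMe (b - 1) hsb
      have hj1 : 2 * (b - 1) + 2 = j := by omega
      rcases Nat.even_or_odd' i with ⟨a, ha | ha⟩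
      · -- i = 2*a
        rcases Nat.eq_zero_or_pos a with rfl | ha1
        · -- i = 0, so f j = s ∈ supp M, contradiction
          have : f j ∈ supp M := by
            rw [← hj1]
            rw [Sym2.eq_swap] at hMj
            exact hMsupp _ _ hMj
          rw [← hEq] at this
          simp only [ha, Nat.mul_zero, hf0] at this
          exact hs this
        · have hsa : f (2 * (a - 1) + 1) ∈ supp M := by
            apply hGood
            apply hlt_of_lt _ j (by omega) hjn
          have hMi : s(f (2 * (a - 1) + 1), f (2 * (a - 1) + 2)) ∈ M := hMe (a - 1) hsa
          have hi1 : 2 * (a - 1) + 2 = i := by omega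
          rw [hi1] at hMi
          rw [hj1] at hMj
          rw [hEq] at hMi
          rw [Sym2.eq_swap] at hMi hMj
          have heq2 : f (2 * (a - 1) + 1) = f (j - 1) := by
            have := hM.uniq hMi hMj
            rwa [show 2 * (b - 1) + 1 = j - 1 by omega] at this
          exact IH (j - 1) (by omega) (hlt_of_lt _ j (by omega) hjn)
            (2 * (a - 1) + 1) (by omega) heq2
      · -- i = 2*a + 1
        have hsi : f i ∈ supp M := by
          rw [hEq, ← hj1, Sym2.eq_swap] at *
          exact hMsupp _ _ hMj
        have hMi : s(f (2 * a + 1), f (2 * a + 2)) ∈ M := hMe a (ha ▸ hsi)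
        rw [ha] at hEq
        rw [hEq] at hMi
        rw [hj1] at hMj
        rw [Sym2.eq_swap] at hMj
        have heq2 : f (2 * a + 2) = f (2 * (b - 1) + 1) := hM.uniq hMi hMj
        rcases Nat.lt_or_ge (2 * a + 2) j with hlt | hge
        · exact IH (2 * (b - 1) + 1) (by omega) (hlt_of_lt _ j (by omega) hjn)
            (2 * a + 2) (by omega) heq2
        · -- 2*a+2 = j, so f j = f (j-1): contradicts non-loop of hMj
          have h2aj : 2 * a + 2 = j := by omega
          rw [h2aj] at heq2
          exact hM.ne hMj heq2
    · -- j = 2*b + 1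
      have hNj : s(f (2 * b), f j) ∈ N := hb ▸ hNe b
      rcases Nat.even_or_odd' i with ⟨a, ha | ha⟩
      · -- i = 2*a
        rcases Nat.lt_or_ge a b with hab | hab
        · have hNi : s(f i, f (2 * a + 1)) ∈ N := ha ▸ hNe a
          rw [hEq] at hNi
          rw [Sym2.eq_swap] at hNj
          have heq2 : f (2 * a + 1) = f (2 * b) := hN.uniq hNi hNj
          exact IH (2 * b) (by omega) (hlt_of_lt _ j (by omega) hjn)
            (2 * a + 1) (by omega) heq2
        · -- a = b, i = j - 1
          have : a = b := by omega
          subst this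
          rw [← ha] at hNj
          exact hN.ne (hEq ▸ hNj) rfl
      · -- i = 2*a + 1
        have hNi : s(f (2 * a), f i) ∈ N := ha ▸ hNe a
        rw [hEq, Sym2.eq_swap] at hNi
        rw [Sym2.eq_swap] at hNj
        have heq2 : f (2 * a) = f (2 * b) := hN.uniq hNi hNj
        exact IH (2 * b) (by omega) (hlt_of_lt _ j (by omega) hjn)
          (2 * a) (by omega) heq2
  -- even edges are not in M
  have hEvenNotM : ∀ k : ℕ, ((2 * k + 1 : ℕ) : ℕ∞) < n → s(f (2 * k), f (2 * k + 1)) ∉ M := by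
    intro k hk hmem
    rcases Nat.eq_zero_or_pos k with rfl | hk1
    · exact hs (by simpa [hf0] using hMsupp (f 0) (f 1) (by simpa using hmem))
    · have hsupp : f (2 * k + 1) ∈ supp M := by
        rw [Sym2.eq_swap] at hmem
        exact hMsupp _ _ hmem
      have h2 := hMe k hsupp
      rw [Sym2.eq_swap] at hmem
      have heq2 : f (2 * k + 2) = f (2 * k) := hM.uniq h2 hmem
      exact hinj (2 * k + 2) (hCont k hk hsupp) (2 * k) (by omega) heq2.symm
  refine ⟨n, f, ⟨le_trans (by norm_num) h2n, ?_, ?_⟩, ?_, lt_of_lt_of_le (by norm_num) h2n,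
    hf0, hs, hEnd⟩
  · -- injectivity
    intro i j hi hj hEq
    rcases lt_trichotomy i j with h' | h' | h'
    · exact absurd hEq (hinj j hj i h')
    · exact h'
    · exact absurd hEq.symm (hinj i hi j h')
  · -- adjacency
    intro i hi
    rcases Nat.even_or_odd' i with ⟨k, hk | hk⟩
    · subst hk
      exact G.mem_edgeSet.mp (hN.1 (hNe k))
    · subst hk
      have hi' : ((2 * k + 2 : ℕ) : ℕ∞) < n := by
        have h' : ((2 * k + 1 : ℕ) : ℕ∞) + 1 = ((2 * k + 2 : ℕ) : ℕ∞) := by push_cast; ring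
        rw [h'] at hi; exact hi
      exact G.mem_edgeSet.mp (hM.1 (hMe k (hGood k hi')))
  · -- alternating
    intro i hi
    rcases Nat.even_or_odd' i with ⟨k, hk | hk⟩
    · subst hk
      have h1 : ((2 * k + 1 : ℕ) : ℕ∞) < n := by
        apply lt_of_le_of_lt _ hi
        push_cast
        calc ((2 * k : ℕ) : ℕ∞) + 1 ≤ (2 * k : ℕ) + 2 := by
              gcongr; norm_num
          _ = _ := rfl
      have h2 : ((2 * k + 2 : ℕ) : ℕ∞) < n := by
        have h' : ((2 * k : ℕ) : ℕ∞) + 2 = ((2 * k + 2 : ℕ) : ℕ∞) := by push_cast; ring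
        rw [h'] at hi; exact hi
      exact iff_of_false (hEvenNotM k h1) (not_not_intro (hMe k (hGood k h2)))
    · subst hk
      have h1 : ((2 * k + 2 : ℕ) : ℕ∞) < n := by
        apply lt_of_le_of_lt _ hi
        push_cast
        gcongr
        norm_num
      have h2 : ((2 * (k + 1) + 1 : ℕ) : ℕ∞) < n := by
        have h' : ((2 * k + 1 : ℕ) : ℕ∞) + 2 = ((2 * (k + 1) + 1 : ℕ) : ℕ∞) := by push_cast; ring
        rw [h'] at hi; exact hi
      have hrw1 : 2 * k + 1 + 1 = 2 * k + 2 := by omega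
      have hrw2 : 2 * k + 1 + 2 = 2 * (k + 1) + 1 := by omega
      have hrw3 : 2 * (k + 1) = 2 * k + 2 := by omega
      rw [hrw1, hrw2]
      have := hEvenNotM (k + 1) h2
      rw [hrw3] at this
      exact iff_of_true (hMe k (hGood k h1)) this

end PaperMatchings
end

section
/- Let G be a simple graph on a countable vertex set. Suppose I1 is an independent subgraph of G, and I2 is a set of vertices disjoint from I1 that is an independent subgraph of the induced subgraph G[V \ I1]. Then I1 ∪ I2 is an independent subgraph of G. -/
namespace PaperMatchings

variable {V : Type*}

section Aux

variable {G : SimpleGraph V} {A M N : Set (Sym2 V)} {v w w' : V}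

lemma mem_supp (h : v ∈ supp A) : ∃ w, s(v, w) ∈ A := by
  obtain ⟨e, he, hv⟩ := h
  exact ⟨Sym2.Mem.other hv, by rwa [Sym2.other_spec hv]⟩

lemma supp_mem (h : s(v, w) ∈ A) : v ∈ supp A := ⟨_, h, Sym2.mem_mk_left _ _⟩

lemma supp_mem' (h : s(v, w) ∈ A) : w ∈ supp A := ⟨_, h, Sym2.mem_mk_right _ _⟩

lemma matching_unique (hA : IsMatching G A) (h : s(v,w) ∈ A) (h' : s(v,w') ∈ A) :
    w = w' := by
  have := hA.2 v _ h _ h' (Sym2.mem_mk_left _ _) (Sym2.mem_mk_left _ _)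
  rcases Sym2.eq_iff.mp this with ⟨_, h2⟩ | ⟨h1, h2⟩
  · exact h2
  · exact h2.trans h1

noncomputable def pd (A : Set (Sym2 V)) (v : V) : V :=
  @Classical.epsilon V ⟨v⟩ fun w => s(v, w) ∈ A

lemma pd_mem (h : ∃ w, s(v, w) ∈ A) : s(v, pd A v) ∈ A :=
  @Classical.epsilon_spec V (fun w => s(v, w) ∈ A) h

lemma pd_eq (hA : IsMatching G A) (h : s(v,w) ∈ A) : pd A v = w :=
  matching_unique hA (pd_mem ⟨w, h⟩) h

lemma supp_union : supp (A ∪ N) = supp A ∪ supp N := by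
  ext v
  constructor
  · rintro ⟨e, he | he, hv⟩
    · exact Or.inl ⟨e, he, hv⟩
    · exact Or.inr ⟨e, he, hv⟩
  · rintro (⟨e, he, hv⟩ | ⟨e, he, hv⟩)
    · exact ⟨e, Or.inl he, hv⟩
    · exact ⟨e, Or.inr he, hv⟩

lemma coeS (a : ℕ) : ((a:ℕ∞)+1) = ((a+1:ℕ):ℕ∞) := by push_cast; ring

lemma coe_lt_of_succ_lt {a : ℕ} {n : ℕ∞} (h : ((a:ℕ∞)+1) < n) : (a:ℕ∞) < n := by
  refine lt_trans ?_ h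
  rw [coeS]
  exact_mod_cast Nat.lt_succ_self a

lemma succ_lt_of_lt_ne {j : ℕ} {n : ℕ∞} (hj : (j:ℕ∞) < n) (hne : n ≠ (j:ℕ∞)+1) :
    ((j:ℕ∞)+1) < n :=
  lt_of_le_of_ne (Order.add_one_le_of_lt hj) (Ne.symm hne)

lemma aug_parity {n : ℕ∞} {f : ℕ → V} {s : V}
    (h : IsAugmentingPath G M n f s) :
    ∀ i : ℕ, ((i : ℕ∞) + 1) < n → (s(f i, f (i + 1)) ∈ M ↔ Odd i) := by
  intro i
  induction i with
  | zero =>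
    intro _
    refine iff_of_false (fun hmem => h.2.2.2.2.1 ?_) (by simp)
    rw [← h.2.2.2.1]
    exact supp_mem hmem
  | succ i ih =>
    intro hi
    have hi' : ((i:ℕ∞)+1) < n := by
      refine lt_trans ?_ hi
      rw [coeS i, coeS (i+1)]
      exact_mod_cast Nat.lt_succ_self (i+1)
    have halt := h.2.1 i (by rw [show ((i:ℕ∞)+2) = ((i+1:ℕ):ℕ∞)+1 by push_cast; ring]; exact hi)
    have hihe := ih hi'
    have parity : Odd (i+1) ↔ ¬ Odd i := by
      simp [Nat.odd_iff]; omega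
    rw [parity, ← hihe]
    constructor
    · intro h' hEi
      exact (halt.mp hEi) h'
    · intro h'
      by_contra hE'
      exact h' (halt.mpr hE')

lemma medge {n : ℕ∞} {f : ℕ → V} {s : V}
    (h : IsAugmentingPath G M n f s) :
    ∀ j : ℕ, (j:ℕ∞) < n → f j ∈ supp M →
      ∃ i : ℕ, ((i:ℕ∞)+1) < n ∧ (j = i ∨ j = i + 1) ∧ Odd i ∧ s(f i, f (i+1)) ∈ M := by
  intro j hj hmem
  rcases Nat.eq_zero_or_pos j with rfl | hjpos
  · exact absurd hmem (h.2.2.2.1 ▸ h.2.2.2.2.1)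
  rcases Nat.even_or_odd j with hje | hjo
  · obtain ⟨t, rfl⟩ : ∃ t, j = t + 1 := ⟨j - 1, by omega⟩
    have ht : Odd t := by simp [Nat.even_add_one, Nat.even_iff, Nat.odd_iff] at hje ⊢; omega
    have hlt : ((t:ℕ∞)+1) < n := by rw [coeS]; exact hj
    exact ⟨t, hlt, Or.inr rfl, ht, (aug_parity h t hlt).mpr ht⟩
  · have hne : n ≠ (j:ℕ∞)+1 := by
      intro hn
      exact (h.2.2.2.2.2 j hn) hmem
    have hlt := succ_lt_of_lt_ne hj hne
    exact ⟨j, hlt, Or.inl rfl, hjo, (aug_parity h j hlt).mpr hjo⟩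

lemma exists_bigger {n : ℕ∞} {f : ℕ → V} {s : V}
    (hM : IsMatching G M) (h : IsAugmentingPath G M n f s) (hp : IsProper M n f) :
    ∃ (N : Set (Sym2 V)) (x1 : V), IsMatching G N ∧ supp M ⊆ supp N ∧
      x1 ∈ supp M ∧ s(s, x1) ∈ N := by
  classical
  have hinj := h.1.2.1
  have hadj := h.1.2.2
  have hf0 := h.2.2.2.1
  have h1n := h.2.2.1
  set Pe : Set (Sym2 V) := {e | ∃ i : ℕ, ((i:ℕ∞)+1) < n ∧ e = s(f i, f (i+1))} with hPeDef
  set NE : Set (Sym2 V) := {e | ∃ i : ℕ, (((2*i:ℕ):ℕ∞)+1) < n ∧ e = s(f (2*i), f (2*i+1))}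
    with hNEDef
  -- a vertex of supp M lying on the path has its M-edge in Pe
  have hMP : ∀ e ∈ M, ∀ j : ℕ, (j:ℕ∞) < n → f j ∈ e → e ∈ Pe := by
    intro e he j hj hve
    have hmem : f j ∈ supp M := ⟨e, he, hve⟩
    obtain ⟨i, hi, hji, _, hEi⟩ := medge h j hj hmem
    have hvEi : f j ∈ s(f i, f (i+1)) := by
      rcases hji with rfl | rfl
      · exact Sym2.mem_mk_left _ _
      · exact Sym2.mem_mk_right _ _
    have : e = s(f i, f (i+1)) := hM.2 (f j) e he _ hEi hve hvEi
    exact ⟨i, hi, this⟩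
  -- membership in an NE edge means being an on-path vertex
  have hNEv : ∀ v : V, ∀ e ∈ NE, v ∈ e → ∃ j : ℕ, (j:ℕ∞) < n ∧ v = f j ∧
      (∃ i : ℕ, (((2*i:ℕ):ℕ∞)+1) < n ∧ e = s(f (2*i), f (2*i+1)) ∧ (j = 2*i ∨ j = 2*i+1)) := by
    rintro v e ⟨i, hi, rfl⟩ hv
    rcases Sym2.mem_iff.mp hv with rfl | rfl
    · exact ⟨2*i, coe_lt_of_succ_lt hi, rfl, i, hi, rfl, Or.inl rfl⟩
    · exact ⟨2*i+1, by rw [← coeS]; exact hi, rfl, i, hi, rfl, Or.inr rfl⟩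
  refine ⟨(M \ Pe) ∪ NE, f 1, ⟨?_, ?_⟩, ?_, ?_, ?_⟩
  · rintro e (⟨heM, -⟩ | ⟨i, hi, rfl⟩)
    · exact hM.1 heM
    · exact (G.mem_edgeSet).mpr (hadj (2*i) hi)
  · -- uniqueness
    have mixed : ∀ v : V, ∀ e ∈ M \ Pe, ∀ e' ∈ NE, v ∈ e → v ∈ e' → False := by
      intro v e he e' he' hv hv'
      obtain ⟨j, hj, rfl, -⟩ := hNEv v e' he' hv'
      exact he.2 (hMP e he.1 j hj hv)
    intro v e he e' he' hv hv'
    rcases he with he | he <;> rcases he' with he' | he'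
    · exact hM.2 v e he.1 e' he'.1 hv hv'
    · exact absurd (mixed v e he e' he' hv hv') id
    · exact absurd (mixed v e' he' e he hv' hv) id
    · obtain ⟨j, hj, hvj, i, hi, rfl, hji⟩ := hNEv v e he hv
      obtain ⟨j', hj', hvj', i', hi', rfl, hji'⟩ := hNEv v e' he' hv'
      have hjj : j = j' := hinj j j' hj hj' (hvj ▸ hvj' ▸ rfl)
      have : i = i' := by rcases hji with rfl | rfl <;> rcases hji' with h' | h' <;> omega
      rw [this]
  · -- supp M ⊆ supp N
    intro v hv
    by_cases honp : ∃ j : ℕ, (j:ℕ∞) < n ∧ v = f j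
    · obtain ⟨j, hj, rfl⟩ := honp
      obtain ⟨i, hi, hji, hoi, hEi⟩ := medge h j hj hv
      rcases Nat.even_or_odd j with hje | hjo
      · -- pair edge (f j, f (j+1))
        obtain ⟨r, hr⟩ := hje
        have hrj : 2*r = j := by omega
        have hltj : ((j:ℕ∞)+1) < n := by
          have hne : n ≠ (j:ℕ∞)+1 := fun hn => (h.2.2.2.2.2 j hn) hv
          exact succ_lt_of_lt_ne hj hne
        refine ⟨s(f (2*r), f (2*r+1)), Or.inr ⟨r, ?_, rfl⟩, ?_⟩
        · rw [hrj]; exact hltj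
        · rw [hrj]; exact Sym2.mem_mk_left _ _
      · -- pair edge (f (j-1), f j)
        obtain ⟨t, rfl⟩ : ∃ t, j = t + 1 := ⟨j - 1, by have := hjo.pos; omega⟩
        have hte : Even t := by simp [Nat.odd_add_one] at hjo; exact hjo
        obtain ⟨r, hr⟩ := hte
        have hrt : 2*r = t := by omega
        refine ⟨s(f (2*r), f (2*r+1)), Or.inr ⟨r, ?_, rfl⟩, ?_⟩
        · rw [hrt, coeS]; exact hj
        · have : 2*r+1 = t+1 := by omega
          rw [this]; exact Sym2.mem_mk_right _ _
    · obtain ⟨w, hw⟩ := mem_supp hv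
      refine ⟨s(v, w), Or.inl ⟨hw, fun hPe => ?_⟩, Sym2.mem_mk_left _ _⟩
      obtain ⟨i, hi, hEq⟩ := hPe
      have hvmem : v ∈ s(f i, f (i+1)) := hEq ▸ Sym2.mem_mk_left v w
      rcases Sym2.mem_iff.mp hvmem with rfl | rfl
      · exact honp ⟨i, coe_lt_of_succ_lt hi, rfl⟩
      · exact honp ⟨i+1, by rw [← coeS]; exact hi, rfl⟩
  · -- f 1 ∈ supp M
    obtain ⟨i, hi, hEi⟩ := hp
    have hio : Odd i := (aug_parity h i hi).mp hEi
    have h2n : ((1:ℕ):ℕ∞)+1 < n := by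
      have h1i : (1:ℕ) ≤ i := hio.pos
      calc ((1:ℕ):ℕ∞)+1 ≤ (i:ℕ∞)+1 := by
            exact_mod_cast Nat.add_le_add_right h1i 1
        _ < n := hi
    exact supp_mem ((aug_parity h 1 h2n).mpr odd_one)
  · -- s(s, f 1) ∈ N
    refine Or.inr ⟨0, ?_, ?_⟩
    · show ((0:ℕ):ℕ∞)+1 < n
      simpa using h1n
    · show s(s, f 1) = s(f 0, f 1)
      rw [hf0]

lemma walk_lemma {s x1 : V}
    (hN : IsMatching G N) (hM : IsMatching G M)
    (hsub : supp M ⊆ supp N) (hs : s ∉ supp M)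
    (hx : s(s, x1) ∈ N) (hx1 : x1 ∈ supp M) :
    ∃ g : ℕ → V, g 0 = s ∧
      (((∀ i j : ℕ, g i = g j → i = j) ∧
        (∀ j : ℕ, G.Adj (g j) (g (j+1))) ∧
        (∀ j : ℕ, (s(g j, g (j+1)) ∈ M ↔ Odd j)) ∧
        (∀ j : ℕ, 0 < j → g j ∈ supp M)) ∨
      (∃ m : ℕ, Odd m ∧ 3 ≤ m ∧ g m ∉ supp M ∧
        (∀ i j : ℕ, i ≤ m → j ≤ m → g i = g j → i = j) ∧
        (∀ j : ℕ, j + 1 ≤ m → G.Adj (g j) (g (j+1))) ∧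
        (∀ j : ℕ, j + 1 ≤ m → (s(g j, g (j+1)) ∈ M ↔ Odd j)) ∧
        (∀ j : ℕ, 0 < j → j < m → g j ∈ supp M))) := by
  classical
  set g : ℕ → V := fun j => Nat.rec (motive := fun _ => V) s
      (fun i xi => if Even i then pd N xi else pd M xi) j with hgdef
  have hg0 : g 0 = s := rfl
  have hgsucc : ∀ j : ℕ, g (j+1) = if Even j then pd N (g j) else pd M (g j) :=
    fun j => rfl
  have hg1 : g 1 = x1 := by
    show g (0+1) = x1
    rw [hgsucc 0, if_pos Even.zero, hg0]
    exact pd_eq hN hx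
  -- `good b` : the walk has not stopped before index b
  -- key invariant about the alternating edges of the walk
  have key : ∀ j : ℕ, (∀ i, i < j + 1 → Odd i → g i ∈ supp M) →
      ((Odd j → s(g j, g (j+1)) ∈ M ∧ s(g j, g (j+1)) ∉ N) ∧
       (Even j → s(g j, g (j+1)) ∈ N ∧ s(g j, g (j+1)) ∉ M)) := by
    intro j
    induction j with
    | zero =>
      intro _
      refine ⟨fun h => absurd h (by simp), fun _ => ?_⟩
      have h1 : s(g 0, g 1) ∈ N := by rw [hg0, hg1]; exact hx
      refine ⟨h1, fun hmem => hs ?_⟩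
      rw [hg0] at hmem
      exact supp_mem hmem
    | succ j ih =>
      intro hgood
      have IH := ih (fun i hi => hgood i (by omega))
      rcases Nat.even_or_odd j with hj | hj
      · -- j even, j+1 odd
        have hEj := IH.2 hj
        have hj1 : Odd (j+1) := Even.add_one hj
        have hmem : g (j+1) ∈ supp M := hgood (j+1) (by omega) hj1
        have hstep : g (j+2) = pd M (g (j+1)) := by
          rw [hgsucc (j+1), if_neg (Nat.not_even_iff_odd.mpr hj1)]
        have hE1 : s(g (j+1), g (j+2)) ∈ M := by
          rw [hstep]; exact pd_mem (mem_supp hmem)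
        refine ⟨fun _ => ⟨hE1, fun hin => ?_⟩, fun h => absurd h (by
          simpa [Nat.even_add_one] using hj)⟩
        have heq := hN.2 (g (j+1)) _ hEj.1 _ hin (Sym2.mem_mk_right _ _) (Sym2.mem_mk_left _ _)
        rw [← heq] at hE1
        exact hEj.2 hE1
      · -- j odd, j+1 even
        have hEj := IH.1 hj
        have hj1 : Even (j+1) := Odd.add_one hj
        have hmem : g (j+1) ∈ supp M := supp_mem' hEj.1
        have hmemN : g (j+1) ∈ supp N := hsub hmem
        have hstep : g (j+2) = pd N (g (j+1)) := by
          rw [hgsucc (j+1), if_pos hj1]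
        have hE1 : s(g (j+1), g (j+2)) ∈ N := by
          rw [hstep]; exact pd_mem (mem_supp hmemN)
        refine ⟨fun h => absurd h (by simpa [Nat.even_add_one] using hj), fun _ => ⟨hE1, fun hin => ?_⟩⟩
        have heq := hM.2 (g (j+1)) _ hEj.1 _ hin (Sym2.mem_mk_right _ _) (Sym2.mem_mk_left _ _)
        rw [← heq] at hE1
        exact hEj.2 hE1
  -- consequences of key
  have keyE : ∀ j : ℕ, (∀ i, i < j + 1 → Odd i → g i ∈ supp M) →
      (s(g j, g (j+1)) ∈ M ↔ Odd j) := by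
    intro j hgood
    constructor
    · intro hmem
      by_contra hodd
      exact ((key j hgood).2 (Nat.not_odd_iff_even.mp hodd)).2 hmem
    · intro hodd
      exact ((key j hgood).1 hodd).1
  have keyAdj : ∀ j : ℕ, (∀ i, i < j + 1 → Odd i → g i ∈ supp M) →
      G.Adj (g j) (g (j+1)) := by
    intro j hgood
    rcases Nat.even_or_odd j with hj | hj
    · exact (G.mem_edgeSet).mp (hN.1 ((key j hgood).2 hj).1)
    · exact (G.mem_edgeSet).mp (hM.1 ((key j hgood).1 hj).1)
  have keyMatched : ∀ j : ℕ, 0 < j → (∀ i, i < j + 1 → Odd i → g i ∈ supp M) →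
      g j ∈ supp M := by
    intro j hjpos hgood
    rcases Nat.even_or_odd j with hj | hj
    · obtain ⟨t, rfl⟩ : ∃ t, j = t + 1 := ⟨j - 1, by omega⟩
      have hto : Odd t := by
        rcases Nat.even_or_odd t with h' | h'
        · exact absurd (Even.add_one h') (Nat.not_odd_iff_even.mpr hj)
        · exact h'
      exact supp_mem' ((key t (fun i hi => hgood i (by omega))).1 hto).1
    · exact hgood j (by omega) hj
  -- injectivity of the walk up to a good bound
  have inj : ∀ b : ℕ, (∀ i, i < b → Odd i → g i ∈ supp M) →
      ∀ i j : ℕ, i ≤ b → j ≤ b → g i = g j → i = j := by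
    intro b hgoodb
    have goodup : ∀ t : ℕ, t + 1 ≤ b → ∀ i, i < t + 1 → Odd i → g i ∈ supp M :=
      fun t ht i hi => hgoodb i (by omega)
    by_contra hcon
    push_neg at hcon
    obtain ⟨i0, j0, hi0, hj0, heq0, hne0⟩ := hcon
    have hP : ∃ kk : ℕ, ∃ jj, jj < kk ∧ kk ≤ b ∧ g jj = g kk := by
      rcases lt_or_gt_of_ne hne0 with hlt | hlt
      · exact ⟨j0, i0, hlt, hj0, heq0⟩
      · exact ⟨i0, j0, hlt, hi0, heq0.symm⟩
    have hmin : ∀ k' < Nat.find hP, ¬ ∃ jj, jj < k' ∧ k' ≤ b ∧ g jj = g k' :=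
      fun k' hk' => Nat.find_min hP hk'
    obtain ⟨j, hjk, hkb, heq⟩ := Nat.find_spec hP
    set k := Nat.find hP with hkdef
    -- k = t+1
    obtain ⟨t, hkt⟩ : ∃ t, k = t + 1 := ⟨k - 1, by omega⟩
    have htb : t + 1 ≤ b := hkt ▸ hkb
    have hne : ∀ u : ℕ, u + 1 ≤ b → g u ≠ g (u+1) :=
      fun u hu => (keyAdj u (goodup u hu)).ne
    have hjt : j ≠ t := by
      intro hjt'
      subst hjt'
      rw [hkt] at heq
      exact hne j htb heq
    have hjlt : j < t := by omega
    -- useful: g j = g k, k = t+1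
    have heq' : g j = g (t+1) := hkt ▸ heq
    rcases Nat.even_or_odd k with hke | hko
    · -- k even: arrival edge E t ∈ M (t odd)
      have hto : Odd t := by
        rcases Nat.even_or_odd t with h' | h'
        · exact absurd (Even.add_one h') (by rw [← hkt]; exact Nat.not_odd_iff_even.mpr hke)
        · exact h'
      have hEt : s(g t, g (t+1)) ∈ M := ((key t (goodup t htb)).1 hto).1
      have hjne0 : j ≠ 0 := by
        intro hj0'
        apply hs
        rw [← hg0]
        have hgg : g 0 = g (t+1) := by rw [← hj0']; exact heq'
        rw [hgg]
        exact supp_mem' hEt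
      rcases Nat.even_or_odd j with hje | hjo
      · -- j even ≥ 2 : M-edge of g j is E (j-1)
        obtain ⟨u, huj⟩ : ∃ u, j = u + 1 := ⟨j - 1, by omega⟩
        have huo : Odd u := by
          rcases Nat.even_or_odd u with h' | h'
          · exact absurd (huj ▸ Even.add_one h') (Nat.not_odd_iff_even.mpr hje)
          · exact h'
        have hub : u + 1 ≤ b := by omega
        have hEu : s(g u, g (u+1)) ∈ M := ((key u (goodup u hub)).1 huo).1
        have hmm : g j ∈ s(g u, g (u+1)) := by rw [huj]; exact Sym2.mem_mk_right _ _
        have hmt : g j ∈ s(g t, g (t+1)) := by rw [heq']; exact Sym2.mem_mk_right _ _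
        have heqE := hM.2 (g j) _ hEu _ hEt hmm hmt
        rcases Sym2.eq_iff.mp heqE with ⟨ha, hb'⟩ | ⟨ha, hb'⟩
        · -- g u = g t, u < t
          exact hmin t (by omega) ⟨u, by omega, by omega, ha⟩
        · -- g u = g (t+1), g (u+1) = g t : g j = g t with j < t
          exact hmin t (by omega) ⟨j, by omega, by omega, by rw [huj, hb']⟩
      · -- j odd : M-edge of g j is E j
        have hjb : j + 1 ≤ b := by omega
        have hEj : s(g j, g (j+1)) ∈ M := ((key j (goodup j hjb)).1 hjo).1
        have hmt : g j ∈ s(g t, g (t+1)) := by rw [heq']; exact Sym2.mem_mk_right _ _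
        have heqE := hM.2 (g j) _ hEj _ hEt (Sym2.mem_mk_left _ _) hmt
        rcases Sym2.eq_iff.mp heqE with ⟨ha, hb'⟩ | ⟨ha, hb'⟩
        · -- g j = g t
          exact hmin t (by omega) ⟨j, by omega, by omega, ha⟩
        · -- g j = g (t+1) trivial, g (j+1) = g t : parity j+1 even, t odd so j+1 ≠ t, j+1 < t
          have hj1t : j + 1 ≠ t := by
            have h1 := Nat.odd_iff.mp hjo
            have h2 := Nat.odd_iff.mp hto
            omega
          exact hmin t (by omega) ⟨j+1, by omega, by omega, hb'⟩
    · -- k odd: arrival edge E t ∈ N (t even)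
      have hte : Even t := by
        rcases Nat.even_or_odd t with h' | h'
        · exact h'
        · exact absurd (hkt ▸ Odd.add_one h') (Nat.not_even_iff_odd.mpr hko)
      have hEt : s(g t, g (t+1)) ∈ N := ((key t (goodup t htb)).2 hte).1
      rcases Nat.eq_zero_or_pos j with rfl | hjpos
      · -- j = 0 : N-edge of s is E 0
        have h0b : 0 + 1 ≤ b := by omega
        have hE0 : s(g 0, g 1) ∈ N := ((key 0 (goodup 0 h0b)).2 Even.zero).1
        have hmt : g 0 ∈ s(g t, g (t+1)) := by rw [heq']; exact Sym2.mem_mk_right _ _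
        have heqE := hN.2 (g 0) _ hE0 _ hEt (Sym2.mem_mk_left _ _) hmt
        have ht0 : t ≠ 0 := fun hc => hjt (by omega)
        have hk3 : 3 ≤ k := by
          have h1 := Nat.odd_iff.mp hko
          omega
        rcases Sym2.eq_iff.mp heqE with ⟨ha, hb'⟩ | ⟨ha, hb'⟩
        · exact hmin t (by omega) ⟨0, by omega, by omega, ha⟩
        · exact hmin t (by omega) ⟨1, by omega, by omega, hb'⟩
      rcases Nat.even_or_odd j with hje | hjo
      · -- j even > 0 : N-edge of g j is E j
        have hjb : j + 1 ≤ b := by omega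
        have hEj : s(g j, g (j+1)) ∈ N := ((key j (goodup j hjb)).2 hje).1
        have hmt : g j ∈ s(g t, g (t+1)) := by rw [heq']; exact Sym2.mem_mk_right _ _
        have heqE := hN.2 (g j) _ hEj _ hEt (Sym2.mem_mk_left _ _) hmt
        rcases Sym2.eq_iff.mp heqE with ⟨ha, hb'⟩ | ⟨ha, hb'⟩
        · exact hmin t (by omega) ⟨j, by omega, by omega, ha⟩
        · have hj1t : j + 1 ≠ t := by
            have h1 := Nat.even_iff.mp hje
            have h2 := Nat.even_iff.mp hte
            omega
          exact hmin t (by omega) ⟨j+1, by omega, by omega, hb'⟩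
      · -- j odd : N-edge of g j is E (j-1)
        obtain ⟨u, huj⟩ : ∃ u, j = u + 1 := ⟨j - 1, by omega⟩
        have hue : Even u := by
          rcases Nat.even_or_odd u with h' | h'
          · exact h'
          · exact absurd (huj ▸ Odd.add_one h') (Nat.not_even_iff_odd.mpr (huj ▸ hjo))
        have hub : u + 1 ≤ b := by omega
        have hEu : s(g u, g (u+1)) ∈ N := ((key u (goodup u hub)).2 hue).1
        have hmm : g j ∈ s(g u, g (u+1)) := by rw [huj]; exact Sym2.mem_mk_right _ _
        have hmt : g j ∈ s(g t, g (t+1)) := by rw [heq']; exact Sym2.mem_mk_right _ _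
        have heqE := hN.2 (g j) _ hEu _ hEt hmm hmt
        rcases Sym2.eq_iff.mp heqE with ⟨ha, hb'⟩ | ⟨ha, hb'⟩
        · exact hmin t (by omega) ⟨u, by omega, by omega, ha⟩
        · exact hmin t (by omega) ⟨j, by omega, by omega, by rw [huj, hb']⟩
    -- end of injectivity
  by_cases hstop : ∃ jj : ℕ, Odd jj ∧ g jj ∉ supp M
  · -- finite walk
    set m := Nat.find hstop with hmdef
    obtain ⟨hmo, hmout⟩ := Nat.find_spec hstop
    rw [← hmdef] at hmo hmout
    have hgoodm : ∀ i, i < m → Odd i → g i ∈ supp M := by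
      intro i hi hio
      by_contra hc
      exact Nat.find_min hstop hi ⟨hio, hc⟩
    have hm1 : m ≠ 1 := by
      intro hc
      apply hmout
      rw [hc, hg1]
      exact hx1
    have hm3 : 3 ≤ m := by
      have := hmo
      rcases this with ⟨r, hr⟩
      omega
    refine ⟨g, hg0, Or.inr ⟨m, hmo, hm3, hmout, ?_, ?_, ?_, ?_⟩⟩
    · exact inj m hgoodm
    · intro u hu
      exact keyAdj u (fun i hi hio => hgoodm i (by omega) hio)
    · intro u hu
      exact keyE u (fun i hi hio => hgoodm i (by omega) hio)
    · intro u hupos hum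
      exact keyMatched u hupos (fun i hi hio => hgoodm i (by omega) hio)
  · -- infinite walk
    push_neg at hstop
    have hgoodall : ∀ i : ℕ, Odd i → g i ∈ supp M := hstop
    refine ⟨g, hg0, Or.inl ⟨?_, ?_, ?_, ?_⟩⟩
    · intro i j hij
      exact inj (max i j + 1) (fun i' _ hio => hgoodall i' hio) i j (by omega) (by omega) hij
    · intro u
      exact keyAdj u (fun i _ hio => hgoodall i hio)
    · intro u
      exact keyE u (fun i _ hio => hgoodall i hio)
    · intro u hupos
      exact keyMatched u hupos (fun i _ hio => hgoodall i hio)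

lemma coe_lt_top (a : ℕ) : (a:ℕ∞) < ⊤ := lt_top_iff_ne_top.mpr (ENat.coe_ne_top a)

lemma build_finite {H : SimpleGraph V} {M'' : Set (Sym2 V)} {g : ℕ → V} {a b : ℕ}
    (hab : a + 2 ≤ b) (hEa : Even a)
    (hinj : ∀ i j, a ≤ i → i ≤ b → a ≤ j → j ≤ b → g i = g j → i = j)
    (hadj : ∀ j, a ≤ j → j < b → H.Adj (g j) (g (j+1)))
    (hpat : ∀ j, a ≤ j → j < b → (s(g j, g (j+1)) ∈ M'' ↔ Odd j))
    (hsa : g a ∉ supp M'') (hsb : g b ∉ supp M'') :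
    ∃ (n : ℕ∞) (f : ℕ → V), IsAugmentingPath H M'' n f (g a) ∧ IsProper M'' n f := by
  refine ⟨((b - a + 1 : ℕ) : ℕ∞), fun i => g (a + i), ⟨⟨?_, ?_, ?_⟩, ?_, ?_, rfl, hsa, ?_⟩, ?_⟩
  · exact_mod_cast Nat.one_le_iff_ne_zero.mpr (by omega)
  · intro i j hi hj heq
    rw [Nat.cast_lt] at hi hj
    have := hinj (a+i) (a+j) (by omega) (by omega) (by omega) (by omega) heq
    omega
  · intro i hi
    rw [coeS, Nat.cast_lt] at hi
    exact hadj (a+i) (by omega) (by omega)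
  · intro i hi
    rw [show ((i:ℕ∞)+2) = ((i+2:ℕ):ℕ∞) by push_cast; ring, Nat.cast_lt] at hi
    have h1 := hpat (a+i) (by omega) (by omega)
    have h2 := hpat (a+i+1) (by omega) (by omega)
    show s(g (a+i), g (a+i+1)) ∈ M'' ↔ s(g (a+i+1), g (a+i+1+1)) ∉ M''
    rw [h1, h2, Nat.odd_iff, Nat.odd_iff]
    omega
  · exact_mod_cast (by omega : 1 < b - a + 1)
  · intro k hk
    rw [coeS, Nat.cast_inj] at hk
    have hak : a + k = b := by omega
    show g (a+k) ∉ supp M''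
    rw [hak]
    exact hsb
  · refine ⟨1, ?_, ?_⟩
    · rw [coeS, Nat.cast_lt]
      omega
    · refine (hpat (a+1) (by omega) (by omega)).mpr ?_
      rw [Nat.odd_iff]
      have := Nat.even_iff.mp hEa
      omega

lemma build_infinite {H : SimpleGraph V} {M'' : Set (Sym2 V)} {g : ℕ → V} {a : ℕ}
    (hEa : Even a)
    (hinj : ∀ i j, a ≤ i → a ≤ j → g i = g j → i = j)
    (hadj : ∀ j, a ≤ j → H.Adj (g j) (g (j+1)))
    (hpat : ∀ j, a ≤ j → (s(g j, g (j+1)) ∈ M'' ↔ Odd j))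
    (hsa : g a ∉ supp M'') :
    ∃ (n : ℕ∞) (f : ℕ → V), IsAugmentingPath H M'' n f (g a) ∧ IsProper M'' n f := by
  refine ⟨(⊤ : ℕ∞), fun i => g (a + i), ⟨⟨le_top, ?_, ?_⟩, ?_, ?_, rfl, hsa, ?_⟩, ?_⟩
  · intro i j _ _ heq
    have := hinj (a+i) (a+j) (by omega) (by omega) heq
    omega
  · intro i _
    exact hadj (a+i) (by omega)
  · intro i _
    have h1 := hpat (a+i) (by omega)
    have h2 := hpat (a+i+1) (by omega)
    show s(g (a+i), g (a+i+1)) ∈ M'' ↔ s(g (a+i+1), g (a+i+1+1)) ∉ M''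
    rw [h1, h2, Nat.odd_iff, Nat.odd_iff]
    omega
  · rw [show (1:ℕ∞) = ((1:ℕ):ℕ∞) by simp]
    exact coe_lt_top 1
  · intro k hk
    rw [coeS] at hk
    exact absurd hk.symm (ENat.coe_ne_top (k+1))
  · refine ⟨1, ?_, ?_⟩
    · rw [coeS]
      exact coe_lt_top 2
    · refine (hpat (a+1) (by omega)).mpr ?_
      rw [Nat.odd_iff]
      have := Nat.even_iff.mp hEa
      omega

lemma matching_of_restrict {S : Set V} {A : Set (Sym2 V)}
    (h : IsMatching (restrict G S) A) : IsMatching G A := by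
  refine ⟨fun e he => ?_, h.2⟩
  induction e using Sym2.ind with
  | _ a b => exact (G.mem_edgeSet).mpr ((((restrict G S).mem_edgeSet).mp (h.1 he)).1)

end Aux

/-- If `I1` is an independent subgraph of `G` and `I2` (disjoint from `I1`)
is an independent subgraph of `G[V \ I1]`, then `I1 ∪ I2` is an independent subgraph
of `G`. -/
theorem indepSubgraph_union_of_indep_in_complement {V : Type*} [Countable V]
    (G : SimpleGraph V) (I1 I2 : Set V) (hdisj : Disjoint I1 I2)
    (h1 : IndepSubgraph G I1) (h2 : IndepSubgraph (restrict G I1ᶜ) I2) :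
    IndepSubgraph G (I1 ∪ I2) := by
  classical
  obtain ⟨⟨M1, hM1, hS1⟩, hInd1⟩ := h1
  obtain ⟨⟨M2, hM2, hS2⟩, hInd2⟩ := h2
  have hM2G : IsMatching G M2 := matching_of_restrict hM2
  have hM1v : ∀ e ∈ M1, ∀ v ∈ e, v ∈ I1 := fun e he v hv => hS1 ▸ (⟨e, he, hv⟩ : v ∈ supp M1)
  have hM2v : ∀ e ∈ M2, ∀ v ∈ e, v ∈ I2 := fun e he v hv => hS2 ▸ (⟨e, he, hv⟩ : v ∈ supp M2)
  have hMst : IsMatching G (M1 ∪ M2) := by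
    constructor
    · rintro e (he | he)
      · exact hM1.1 he
      · exact hM2G.1 he
    · intro v e he e' he' hv hv'
      rcases he with he | he <;> rcases he' with he' | he'
      · exact hM1.2 v e he e' he' hv hv'
      · exact absurd (hM2v e' he' v hv') (Set.disjoint_left.mp hdisj (hM1v e he v hv))
      · exact absurd (hM2v e he v hv) (Set.disjoint_left.mp hdisj (hM1v e' he' v hv'))
      · exact hM2G.2 v e he e' he' hv hv'
  have hSst : supp (M1 ∪ M2) = I1 ∪ I2 := by rw [supp_union, hS1, hS2]
  refine ⟨⟨M1 ∪ M2, hMst, hSst⟩, ?_⟩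
  intro M hM hSM
  refine ⟨hM, ?_⟩
  rintro ⟨s, n, f, haug, hprop⟩
  have hsM : s ∉ supp M := haug.2.2.2.2.1
  obtain ⟨N, x1, hNm, hsubMN, hx1M, hsx1⟩ := exists_bigger hM haug hprop
  have hsupEq : supp (M1 ∪ M2) = supp M := by rw [hSst, hSM]
  have hsub : supp (M1 ∪ M2) ⊆ supp N := by rw [hsupEq]; exact hsubMN
  have hsSt : s ∉ supp (M1 ∪ M2) := by rw [hsupEq]; exact hsM
  have hx1St : x1 ∈ supp (M1 ∪ M2) := by rw [hsupEq]; exact hx1M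
  obtain ⟨g, hg0, hcase⟩ := walk_lemma hNm hMst hsub hsSt hsx1 hx1St
  have hsI : s ∉ I1 ∪ I2 := by rw [← hSM]; exact hsM
  have hedgeI1 : ∀ e ∈ M1 ∪ M2, ∀ v ∈ e, v ∈ I1 → e ∈ M1 := by
    rintro e (he | he) v hv hvI
    · exact he
    · exact absurd (hM2v e he v hv) (Set.disjoint_left.mp hdisj hvI)
  have hedge2 : ∀ e ∈ M1 ∪ M2, ∀ v ∈ e, v ∉ I1 → e ∈ M2 := by
    rintro e (he | he) v hv hvI
    · exact absurd (hM1v e he v hv) hvI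
    · exact he
  rcases hcase with ⟨hinj, hadj, hpat, hmat⟩ | ⟨m, hmo, hm3, hmout, hinj, hadj, hpat, hmat⟩
  · -- infinite walk
    by_cases hhit : ∃ j : ℕ, g j ∈ I1
    · have hkI : g (Nat.find hhit) ∈ I1 := Nat.find_spec hhit
      have hkmin : ∀ i < Nat.find hhit, g i ∉ I1 := fun i hi hc => Nat.find_min hhit hi hc
      set k := Nat.find hhit with hkdef
      have hk1 : 1 ≤ k := by
        rcases Nat.eq_zero_or_pos k with h0 | h
        · exfalso
          apply hsI
          rw [← hg0, ← h0]
          exact Or.inl hkI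
        · exact h
      have hko : Odd k := by
        rcases Nat.even_or_odd k with hke | hko
        · exfalso
          obtain ⟨u, hu⟩ : ∃ u, k = u + 1 := ⟨k - 1, by omega⟩
          have huo : Odd u := by
            rw [Nat.odd_iff]
            have := Nat.even_iff.mp hke
            omega
          have hEu : s(g u, g (u+1)) ∈ M1 ∪ M2 := (hpat u).mpr huo
          have hEu1 : s(g u, g (u+1)) ∈ M1 :=
            hedgeI1 _ hEu (g (u+1)) (Sym2.mem_mk_right _ _) (by rw [← hu]; exact hkI)
          exact hkmin u (by omega) (hM1v _ hEu1 (g u) (Sym2.mem_mk_left _ _))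
        · exact hko
      have hEk : s(g k, g (k+1)) ∈ M1 := hedgeI1 _ ((hpat k).mpr hko) (g k) (Sym2.mem_mk_left _ _) hkI
      have hk1I : g (k+1) ∈ I1 := hM1v _ hEk (g (k+1)) (Sym2.mem_mk_right _ _)
      have hEa : Even (k-1) := by
        rw [Nat.even_iff]
        have := Nat.odd_iff.mp hko
        omega
      by_cases hout : ∃ j : ℕ, k ≤ j ∧ g j ∉ I1
      · have hlspec := Nat.find_spec hout
        have hlmin : ∀ i < Nat.find hout, ¬(k ≤ i ∧ g i ∉ I1) := fun i hi => Nat.find_min hout hi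
        set l := Nat.find hout with hldef
        have region : ∀ i, k ≤ i → i < l → g i ∈ I1 := by
          intro i hki hil
          by_contra hc
          exact hlmin i hil ⟨hki, hc⟩
        have hl2 : k - 1 + 2 ≤ l := by
          have hne1 : l ≠ k := fun hc => hlspec.2 (hc ▸ hkI)
          have hne2 : l ≠ k + 1 := fun hc => hlspec.2 (hc ▸ hk1I)
          have := hlspec.1
          omega
        obtain ⟨n', f', hA, hP⟩ := build_finite (H := G) (M'' := M1) (g := g)
          (a := k-1) (b := l) hl2 hEa
          (fun i j _ _ _ _ heq => hinj i j heq)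
          (fun j _ _ => hadj j)
          (by
            intro j hj1 hj2
            constructor
            · intro hm
              exact (hpat j).mp (Or.inl hm)
            · intro hodd
              have hjk : k ≤ j := by
                have h1 := Nat.odd_iff.mp hodd
                have h2 := Nat.odd_iff.mp hko
                omega
              exact hedgeI1 _ ((hpat j).mpr hodd) (g j) (Sym2.mem_mk_left _ _)
                (region j hjk hj2))
          (by rw [hS1]; exact hkmin (k-1) (by omega))
          (by rw [hS1]; exact hlspec.2)
        exact (hInd1 M1 hM1 hS1).2 ⟨g (k-1), n', f', hA, hP⟩
      · push_neg at hout
        obtain ⟨n', f', hA, hP⟩ := build_infinite (H := G) (M'' := M1) (g := g)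
          (a := k-1) hEa
          (fun i j _ _ heq => hinj i j heq)
          (fun j _ => hadj j)
          (by
            intro j hj1
            constructor
            · intro hm
              exact (hpat j).mp (Or.inl hm)
            · intro hodd
              have hjk : k ≤ j := by
                have h1 := Nat.odd_iff.mp hodd
                have h2 := Nat.odd_iff.mp hko
                omega
              exact hedgeI1 _ ((hpat j).mpr hodd) (g j) (Sym2.mem_mk_left _ _)
                (hout j hjk))
          (by rw [hS1]; exact hkmin (k-1) (by omega))
        exact (hInd1 M1 hM1 hS1).2 ⟨g (k-1), n', f', hA, hP⟩
    · push_neg at hhit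
      obtain ⟨n', f', hA, hP⟩ := build_infinite (H := restrict G I1ᶜ) (M'' := M2) (g := g)
        (a := 0) Even.zero
        (fun i j _ _ heq => hinj i j heq)
        (fun j _ => ⟨hadj j, hhit j, hhit (j+1)⟩)
        (by
          intro j _
          constructor
          · intro hm
            exact (hpat j).mp (Or.inr hm)
          · intro hodd
            exact hedge2 _ ((hpat j).mpr hodd) (g j) (Sym2.mem_mk_left _ _) (hhit j))
        (by
          rw [hg0, hS2]
          exact fun h => hsI (Or.inr h))
      exact (hInd2 M2 hM2 hS2).2 ⟨g 0, n', f', hA, hP⟩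
  · -- finite walk of length m
    have hmI : g m ∉ I1 ∪ I2 := by rw [← hSst]; exact hmout
    by_cases hhit : ∃ j : ℕ, j ≤ m ∧ g j ∈ I1
    · obtain ⟨hkm, hkI⟩ := Nat.find_spec hhit
      have hkmin : ∀ i < Nat.find hhit, ¬(i ≤ m ∧ g i ∈ I1) := fun i hi => Nat.find_min hhit hi
      set k := Nat.find hhit with hkdef
      have hkmin' : ∀ i < k, g i ∉ I1 := fun i hi hc => hkmin i hi ⟨by omega, hc⟩
      have hk1 : 1 ≤ k := by
        rcases Nat.eq_zero_or_pos k with h0 | h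
        · exfalso
          apply hsI
          rw [← hg0, ← h0]
          exact Or.inl hkI
        · exact h
      have hkltm : k < m := by
        have : k ≠ m := fun hc => (fun h => hmI (Or.inl h)) (hc ▸ hkI)
        omega
      have hko : Odd k := by
        rcases Nat.even_or_odd k with hke | hko
        · exfalso
          obtain ⟨u, hu⟩ : ∃ u, k = u + 1 := ⟨k - 1, by omega⟩
          have huo : Odd u := by
            rw [Nat.odd_iff]
            have := Nat.even_iff.mp hke
            omega
          have hEu : s(g u, g (u+1)) ∈ M1 ∪ M2 := (hpat u (by omega)).mpr huo
          have hEu1 : s(g u, g (u+1)) ∈ M1 :=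
            hedgeI1 _ hEu (g (u+1)) (Sym2.mem_mk_right _ _) (by rw [← hu]; exact hkI)
          exact hkmin' u (by omega) (hM1v _ hEu1 (g u) (Sym2.mem_mk_left _ _))
        · exact hko
      have hEk : s(g k, g (k+1)) ∈ M1 :=
        hedgeI1 _ ((hpat k (by omega)).mpr hko) (g k) (Sym2.mem_mk_left _ _) hkI
      have hk1I : g (k+1) ∈ I1 := hM1v _ hEk (g (k+1)) (Sym2.mem_mk_right _ _)
      have hEa : Even (k-1) := by
        rw [Nat.even_iff]
        have := Nat.odd_iff.mp hko
        omega
      have hout : ∃ j : ℕ, k ≤ j ∧ j ≤ m ∧ g j ∉ I1 :=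
        ⟨m, by omega, le_refl m, fun h => hmI (Or.inl h)⟩
      obtain ⟨hlk, hlm, hlI⟩ := Nat.find_spec hout
      have hlmin : ∀ i < Nat.find hout, ¬(k ≤ i ∧ i ≤ m ∧ g i ∉ I1) :=
        fun i hi => Nat.find_min hout hi
      set l := Nat.find hout with hldef
      have region : ∀ i, k ≤ i → i < l → g i ∈ I1 := by
        intro i hki hil
        by_contra hc
        exact hlmin i hil ⟨hki, by omega, hc⟩
      have hl2 : k - 1 + 2 ≤ l := by
        have hne1 : l ≠ k := fun hc => hlI (hc ▸ hkI)
        have hne2 : l ≠ k + 1 := fun hc => hlI (hc ▸ hk1I)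
        omega
      obtain ⟨n', f', hA, hP⟩ := build_finite (H := G) (M'' := M1) (g := g)
        (a := k-1) (b := l) hl2 hEa
        (fun i j hai hib haj hjb heq => hinj i j (by omega) (by omega) heq)
        (fun j _ hjl => hadj j (by omega))
        (by
          intro j hj1 hj2
          constructor
          · intro hm
            exact (hpat j (by omega)).mp (Or.inl hm)
          · intro hodd
            have hjk : k ≤ j := by
              have h1 := Nat.odd_iff.mp hodd
              have h2 := Nat.odd_iff.mp hko
              omega
            exact hedgeI1 _ ((hpat j (by omega)).mpr hodd) (g j) (Sym2.mem_mk_left _ _)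
              (region j hjk hj2))
        (by rw [hS1]; exact hkmin' (k-1) (by omega))
        (by rw [hS1]; exact hlI)
      exact (hInd1 M1 hM1 hS1).2 ⟨g (k-1), n', f', hA, hP⟩
    · push_neg at hhit
      obtain ⟨n', f', hA, hP⟩ := build_finite (H := restrict G I1ᶜ) (M'' := M2) (g := g)
        (a := 0) (b := m) (by omega) Even.zero
        (fun i j _ hib _ hjb heq => hinj i j hib hjb heq)
        (fun j _ hjm => ⟨hadj j (by omega), hhit j (by omega), hhit (j+1) (by omega)⟩)
        (by
          intro j _ hjm
          constructor
          · intro hm'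
            exact (hpat j (by omega)).mp (Or.inr hm')
          · intro hodd
            exact hedge2 _ ((hpat j (by omega)).mpr hodd) (g j) (Sym2.mem_mk_left _ _)
              (hhit j (by omega)))
        (by
          rw [hg0, hS2]
          exact fun h => hsI (Or.inr h))
        (by
          rw [hS2]
          exact fun h => hmI (Or.inr h))
      exact (hInd2 M2 hM2 hS2).2 ⟨g 0, n', f', hA, hP⟩


end PaperMatchings
end

section
/- Let G be a simple graph on a countable vertex set that satisfies condition (A), and let M be an independent matching of G. Then the induced subgraph of G on V \ V(M) satisfies condition (A). -/
namespace PaperMatchings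

variable {V : Type*}

lemma mem_supp_s7 {M : Set (Sym2 V)} {e : Sym2 V} {v : V} (he : e ∈ M) (hv : v ∈ e) :
    v ∈ supp M := ⟨e, he, hv⟩


/-- parity of edges along an augmenting path -/
lemma parity_lemma {G : SimpleGraph V} {M : Set (Sym2 V)} {n : ℕ∞} {f : ℕ → V} {s : V}
    (hP : IsAugmentingPath G M n f s) :
    ∀ i : ℕ, ((i : ℕ∞) + 1) < n → (s(f i, f (i + 1)) ∈ M ↔ Odd i) := by
  intro i
  induction i with
  | zero =>
    intro _
    constructor
    · intro hmem
      exfalso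
      have h0 : f 0 ∈ supp M := mem_supp_s7 hmem (Sym2.mem_mk_left _ _)
      rw [hP.2.2.2.1] at h0
      exact hP.2.2.2.2.1 h0
    · intro h0; exact absurd h0 (by simp [Nat.odd_iff])
  | succ i ih =>
    intro h
    have h2 : ((i : ℕ∞) + 2) < n := by
      have e : ((i + 1 : ℕ) : ℕ∞) + 1 = (i : ℕ∞) + 2 := by push_cast; ring
      rw [← e]; exact h
    have hi1 : ((i : ℕ∞) + 1) < n :=
      lt_trans (by exact_mod_cast (by omega : i + 1 < i + 2)) h2
    have halt := hP.2.1 i h2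
    have hih := ih hi1
    have he : i + 2 = i + 1 + 1 := rfl
    rw [he] at halt
    rw [Nat.odd_add_one, ← hih]
    tauto

/-- Build a proper augmenting path from a segment of an existing path. -/
lemma exists_proper_aug {G : SimpleGraph V} {M : Set (Sym2 V)} {n : ℕ∞} {f : ℕ → V}
    (hpath : IsPath G n f) (b : ℕ) (L : ℕ∞)
    (hprop : ((1 : ℕ∞) + 1) < L)
    (hvx : ∀ t : ℕ, (t : ℕ∞) < L → ((b + t : ℕ) : ℕ∞) < n)
    (hstart : f b ∉ supp M)
    (hedge : ∀ t : ℕ, ((t : ℕ∞) + 1) < L → (s(f (b + t), f (b + t + 1)) ∈ M ↔ Odd t))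
    (hend : ∀ k : ℕ, L = (k : ℕ∞) + 1 → f (b + k) ∉ supp M) :
    ∃ (s : V) (n' : ℕ∞) (f' : ℕ → V), IsAugmentingPath G M n' f' s ∧ IsProper M n' f' := by
  have hL1 : (1 : ℕ∞) < L :=
    lt_trans (by exact_mod_cast (by omega : (1:ℕ) < 1 + 1)) hprop
  have h1L : ((1 : ℕ∞) + 1) < L := hprop
  refine ⟨f b, L, fun i => f (b + i), ⟨⟨hL1.le, ?_, ?_⟩, ?_, hL1, rfl, hstart, ?_⟩, ?_⟩
  · intro i j hi hj hf
    have := hpath.2.1 (b + i) (b + j) (hvx i hi) (hvx j hj) hf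
    omega
  · intro i hi
    have hi' : ((i + 1 : ℕ) : ℕ∞) < L := by exact_mod_cast hi
    have h1 : ((b + i : ℕ) : ℕ∞) + 1 < n := by
      have := hvx (i + 1) hi'
      have e : ((b + (i + 1) : ℕ) : ℕ∞) = ((b + i : ℕ) : ℕ∞) + 1 := by push_cast; ring
      rw [e] at this; exact this
    exact hpath.2.2 (b + i) h1
  · intro i hi
    have hi1 : ((i : ℕ∞) + 1) < L :=
      lt_trans (by exact_mod_cast (by omega : i + 1 < i + 2)) hi
    have hi2 : (((i + 1 : ℕ) : ℕ∞) + 1) < L := by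
      have e : (((i + 1 : ℕ) : ℕ∞) + 1) = (i : ℕ∞) + 2 := by push_cast; ring
      rw [e]; exact hi
    have h1 := hedge i hi1
    have h2 := hedge (i + 1) hi2
    show s(f (b + i), f (b + i + 1)) ∈ M ↔ s(f (b + i + 1), f (b + i + 1 + 1)) ∉ M
    rw [h1]
    have e : b + (i + 1) = b + i + 1 := rfl
    rw [e] at h2
    rw [h2, Nat.odd_add_one]
    tauto
  · intro k hk
    exact hend k hk
  · refine ⟨1, h1L, ?_⟩
    exact (hedge 1 h1L).2 odd_one

lemma supp_subset_of_restrict {G : SimpleGraph V} {W : Set V} {N : Set (Sym2 V)}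
    (h : N ⊆ (restrict G W).edgeSet) : supp N ⊆ W := by
  rintro v ⟨e, heN, hve⟩
  induction e using Sym2.ind with
  | _ a b =>
    have hadj : (restrict G W).Adj a b := h heN
    rcases Sym2.mem_iff.1 hve with rfl | rfl
    · exact hadj.2.1
    · exact hadj.2.2

/-- Removing the support of an independent matching from a graph
satisfying condition (A) leaves an induced subgraph satisfying condition (A). -/
theorem conditionA_of_remove_indep_matching {V : Type*} [Countable V]
    (G : SimpleGraph V) (hA : ConditionA G) (M : Set (Sym2 V))
    (hM : IndepMatching G M) :
    ConditionAOn G (supp M)ᶜ := by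
  classical
  obtain ⟨hMm, hMind⟩ := hM
  intro N hN s hsW hsN
  have hsuppN : supp N ⊆ (supp M)ᶜ := supp_subset_of_restrict hN.1
  have hNG : N ⊆ G.edgeSet := by
    intro e he
    induction e using Sym2.ind with
    | _ a b => exact (hN.1 he).1
  have hM' : IsMatching G (M ∪ N) := by
    constructor
    · rintro e (he | he)
      · exact hMm.1 he
      · exact hNG he
    · intro v e he e' he' hv hv'
      rcases he with he | he <;> rcases he' with he' | he'
      · exact hMm.2 v e he e' he' hv hv'
      · exact absurd (mem_supp_s7 he hv) (hsuppN (mem_supp_s7 he' hv'))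
      · exact absurd (mem_supp_s7 he' hv') (hsuppN (mem_supp_s7 he hv))
      · exact hN.2 v e he e' he' hv hv'
  have hsubM : supp M ⊆ supp (M ∪ N) := by
    rintro v ⟨e, he, hv⟩; exact ⟨e, Or.inl he, hv⟩
  have hsubN : supp N ⊆ supp (M ∪ N) := by
    rintro v ⟨e, he, hv⟩; exact ⟨e, Or.inr he, hv⟩
  have hs' : s ∉ supp (M ∪ N) := by
    rintro ⟨e, he | he, hv⟩
    · exact hsW (mem_supp_s7 he hv)
    · exact hsN (mem_supp_s7 he hv)
  obtain ⟨n, f, hP⟩ := hA (M ∪ N) hM' s hs'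
  have hpar := parity_lemma hP
  -- the path never touches `supp M`
  have hfree : ∀ i : ℕ, (i : ℕ∞) < n → f i ∉ supp M := by
    by_contra hcon
    push_neg at hcon
    obtain ⟨i₀, hi₀n, hi₀⟩ := hcon
    have hex : ∃ i : ℕ, (i : ℕ∞) < n ∧ f i ∈ supp M := ⟨i₀, hi₀n, hi₀⟩
    obtain ⟨k, ⟨hkn, hkM⟩, hkmin⟩ :
        ∃ k : ℕ, ((k : ℕ∞) < n ∧ f k ∈ supp M) ∧
          ∀ j, j < k → ¬((j : ℕ∞) < n ∧ f j ∈ supp M) :=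
      ⟨Nat.find hex, Nat.find_spec hex, fun j hj => Nat.find_min hex hj⟩
    have hk1 : 1 ≤ k := by
      by_contra h
      have hk0 : k = 0 := by omega
      rw [hk0, hP.2.2.2.1] at hkM
      exact hsW hkM
    obtain ⟨b, hbk⟩ : ∃ b : ℕ, b + 1 = k := ⟨k - 1, by omega⟩
    have hb_cast : ((b : ℕ∞) + 1) = (k : ℕ∞) := by exact_mod_cast hbk
    have hbn1 : ((b : ℕ∞) + 1) < n := hb_cast ▸ hkn
    have hbnn : (b : ℕ∞) < n :=
      lt_trans (by exact_mod_cast (by omega : b < k)) hkn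
    have hbfree : f b ∉ supp M := fun h => hkmin b (by omega) ⟨hbnn, h⟩
    have hkn1 : ((k : ℕ∞) + 1) < n := by
      rcases lt_or_eq_of_le (Order.add_one_le_of_lt hkn) with h | h
      · exact h
      · exact absurd (hsubM hkM) (hP.2.2.2.2.2 k h.symm)
    -- the edge (f b, f k) is not in M ∪ N
    have heb : s(f b, f (b + 1)) ∉ M ∪ N := by
      rintro (h | h)
      · exact hbfree (mem_supp_s7 h (Sym2.mem_mk_left _ _))
      · have : f k ∈ supp N := by
          rw [← hbk]; exact mem_supp_s7 h (Sym2.mem_mk_right _ _)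
        exact hsuppN this hkM
    have hoddk : Odd k := by
      have hob : ¬ Odd b := fun ho => heb ((hpar b hbn1).2 ho)
      rw [Nat.odd_iff] at hob ⊢
      omega
    have hbeven : b % 2 = 0 := by
      rw [Nat.odd_iff] at hoddk; omega
    have hoddbt : ∀ t : ℕ, (Odd (b + t) ↔ Odd t) := by
      intro t; rw [Nat.odd_iff, Nat.odd_iff]; omega
    have hekM : s(f k, f (k + 1)) ∈ M := by
      rcases (hpar k hkn1).2 hoddk with h | h
      · exact h
      · exact absurd hkM (hsuppN (mem_supp_s7 h (Sym2.mem_mk_left _ _)))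
    by_cases hS : ∃ t, Odd t ∧ ((b + t : ℕ) : ℕ∞) + 1 < n ∧ s(f (b + t), f (b + t + 1)) ∈ N
    · -- there is a first odd edge of the tail lying in N: truncate there
      obtain ⟨t₀, ⟨ht₀odd, ht₀n, ht₀N⟩, ht₀min⟩ :
          ∃ t₀ : ℕ, (Odd t₀ ∧ ((b + t₀ : ℕ) : ℕ∞) + 1 < n ∧ s(f (b + t₀), f (b + t₀ + 1)) ∈ N) ∧
            ∀ t, t < t₀ → ¬(Odd t ∧ ((b + t : ℕ) : ℕ∞) + 1 < n ∧ s(f (b + t), f (b + t + 1)) ∈ N) :=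
        ⟨Nat.find hS, Nat.find_spec hS, fun t ht => Nat.find_min hS ht⟩
      have ht₀1 : t₀ ≠ 1 := by
        intro h
        rw [h] at ht₀N
        have : f k ∈ supp N := by
          rw [← hbk]; exact mem_supp_s7 ht₀N (Sym2.mem_mk_left _ _)
        exact hsuppN this hkM
      have ht₀3 : 3 ≤ t₀ := by
        rw [Nat.odd_iff] at ht₀odd; omega
      have hbt₀n : ((b + t₀ : ℕ) : ℕ∞) < n := by
        have e : ((b + t₀ : ℕ) : ℕ∞) + 1 = ((b + t₀ + 1 : ℕ) : ℕ∞) := by push_cast; ring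
        have h1 : ((b + t₀ + 1 : ℕ) : ℕ∞) < n := by rw [← e]; exact ht₀n
        exact lt_trans (Nat.cast_lt.mpr (by omega)) h1
      refine hMind (exists_proper_aug hP.1 b ((t₀ + 1 : ℕ) : ℕ∞) ?_ ?_ hbfree ?_ ?_)
      · exact_mod_cast (by omega : 1 + 1 < t₀ + 1)
      · intro t ht
        have ht' : t < t₀ + 1 := by exact_mod_cast ht
        exact lt_of_le_of_lt (by exact_mod_cast (by omega : b + t ≤ b + t₀)) hbt₀n
      · intro t ht
        have ht' : t + 1 ≤ t₀ := by
          have : ((t + 1 : ℕ) : ℕ∞) < ((t₀ + 1 : ℕ) : ℕ∞) := by push_cast; exact_mod_cast ht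
          have := Nat.cast_lt.mp this
          omega
        have hbt : ((b + t : ℕ) : ℕ∞) + 1 < n := by
          have e : ((b + t : ℕ) : ℕ∞) + 1 = ((b + t + 1 : ℕ) : ℕ∞) := by push_cast; ring
          rw [e]
          exact lt_of_le_of_lt (by exact_mod_cast (by omega : b + t + 1 ≤ b + t₀)) hbt₀n
        have hbpar := hpar (b + t) hbt
        constructor
        · intro h
          exact (hoddbt t).1 (hbpar.1 (Or.inl h))
        · intro h
          rcases hbpar.2 ((hoddbt t).2 h) with hm | hn2
          · exact hm
          · exact absurd ⟨h, hbt, hn2⟩ (ht₀min t (by omega))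
      · intro k' hk'
        have : k' = t₀ := by
          have : ((t₀ + 1 : ℕ) : ℕ∞) = ((k' + 1 : ℕ) : ℕ∞) := by push_cast; exact_mod_cast hk'
          have := Nat.cast_inj.mp this
          omega
        rw [this]
        exact hsuppN (mem_supp_s7 ht₀N (Sym2.mem_mk_left _ _))
    · -- no odd edge of the tail lies in N: take the whole tail
      push_neg at hS
      have hedge : ∀ t : ℕ, ((b + t : ℕ) : ℕ∞) + 1 < n →
          (s(f (b + t), f (b + t + 1)) ∈ M ↔ Odd t) := by
        intro t hbt
        have hbpar := hpar (b + t) hbt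
        constructor
        · intro h
          exact (hoddbt t).1 (hbpar.1 (Or.inl h))
        · intro h
          rcases hbpar.2 ((hoddbt t).2 h) with hm | hn2
          · exact hm
          · exact absurd hn2 (hS t h hbt)
      rcases eq_or_ne n ⊤ with htop | hne
      · refine hMind (exists_proper_aug hP.1 b ⊤ ?_ ?_ hbfree ?_ ?_)
        · exact_mod_cast ENat.coe_lt_top 2
        · intro t _; rw [htop]; exact ENat.coe_lt_top _
        · intro t _
          exact hedge t (by rw [htop]; exact_mod_cast ENat.coe_lt_top (b + t + 1))
        · intro k' hk'
          exact absurd hk'.symm (by exact_mod_cast ENat.coe_ne_top (k' + 1))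
      · lift n to ℕ using hne with n₀
        have hkn₀ : k + 1 < n₀ := by exact_mod_cast hkn1
        refine hMind (exists_proper_aug hP.1 b ((n₀ - b : ℕ) : ℕ∞) ?_ ?_ hbfree ?_ ?_)
        · exact_mod_cast (by omega : 1 + 1 < n₀ - b)
        · intro t ht
          have : t < n₀ - b := by exact_mod_cast ht
          exact_mod_cast (by omega : b + t < n₀)
        · intro t ht
          have ht' : t + 1 < n₀ - b := by
            have : ((t + 1 : ℕ) : ℕ∞) < ((n₀ - b : ℕ) : ℕ∞) := by push_cast; exact_mod_cast ht
            exact Nat.cast_lt.mp this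
          refine hedge t ?_
          have e : ((b + t : ℕ) : ℕ∞) + 1 = ((b + t + 1 : ℕ) : ℕ∞) := by push_cast; ring
          rw [e]
          exact_mod_cast (by omega : b + t + 1 < n₀)
        · intro k' hk'
          have hk'' : n₀ - b = k' + 1 := by
            have : ((n₀ - b : ℕ) : ℕ∞) = ((k' + 1 : ℕ) : ℕ∞) := by push_cast; exact_mod_cast hk'
            exact Nat.cast_inj.mp this
          have hn : (n₀ : ℕ∞) = ((b + k' : ℕ) : ℕ∞) + 1 := by
            have e : ((b + k' : ℕ) : ℕ∞) + 1 = ((b + k' + 1 : ℕ) : ℕ∞) := by push_cast; ring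
            rw [e]
            exact_mod_cast (by omega : n₀ = b + k' + 1)
          exact fun hm => hP.2.2.2.2.2 (b + k') hn (hsubM hm)
  -- now the path lives in the restricted graph and is N-augmenting
  obtain ⟨⟨hn1, hinj, hadj⟩, halt, hln, hf0, _, hend⟩ := hP
  have key : ∀ t : ℕ, ((t : ℕ∞) + 1) < n →
      (s(f t, f (t + 1)) ∈ M ∪ N ↔ s(f t, f (t + 1)) ∈ N) := by
    intro t ht
    constructor
    · rintro (h | h)
      · exact absurd (mem_supp_s7 h (Sym2.mem_mk_left _ _))
          (hfree t (lt_trans (by exact_mod_cast (by omega : t < t + 1)) ht))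
      · exact h
    · exact Or.inr
  refine ⟨n, f, ⟨hn1, hinj, ?_⟩, ?_, hln, hf0, hsN, ?_⟩
  · intro i hi
    have hi' : (i : ℕ∞) < n := lt_trans (by exact_mod_cast (by omega : i < i + 1)) hi
    have hi1 : ((i + 1 : ℕ) : ℕ∞) < n := by exact_mod_cast hi
    exact ⟨hadj i hi, hfree i hi', hfree (i + 1) hi1⟩
  · intro i hi
    have h1 : ((i : ℕ∞) + 1) < n :=
      lt_trans (by exact_mod_cast (by omega : i + 1 < i + 2)) hi
    have h2 : (((i + 1 : ℕ) : ℕ∞) + 1) < n := by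
      have e : (((i + 1 : ℕ) : ℕ∞) + 1) = (i : ℕ∞) + 2 := by push_cast; ring
      rw [e]; exact hi
    have halt' := halt i hi
    rw [show i + 2 = i + 1 + 1 from rfl] at halt'
    rw [key i h1, key (i + 1) h2] at halt'
    exact halt'
  · intro k' hk' hsupp
    exact hend k' hk' (hsubN hsupp)


end PaperMatchings
end

section
/- Let G be a simple graph and let M be a matching of G of maximal support, i.e., V(M) is not properly contained in the support of any other matching of G. Then M is an independent matching of G. -/
namespace PaperMatchings

variable {V : Type*}

-- helper lemmas
lemma enat_lt_succ (i : ℕ) : (i:ℕ∞) < (i:ℕ∞) + 1 := by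
  have : ((i:ℕ):ℕ∞) < ((i+1:ℕ):ℕ∞) := by exact_mod_cast Nat.lt_succ_self i
  push_cast at this; exact this

lemma enat_lt_of_succ_lt {i : ℕ} {n : ℕ∞} (h : (i:ℕ∞) + 1 < n) : (i:ℕ∞) < n :=
  lt_trans (enat_lt_succ i) h

lemma enat_succ_lt_of_lt_ne {i : ℕ} {n : ℕ∞} (h : (i:ℕ∞) < n) (hne : n ≠ (i:ℕ∞) + 1) :
    (i:ℕ∞) + 1 < n :=
  lt_of_le_of_ne (Order.add_one_le_of_lt h) (Ne.symm hne)


/-- A matching of maximal support is independent. -/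
theorem maximal_matching_is_indep {V : Type*} (G : SimpleGraph V)
    (M : Set (Sym2 V)) (hM : IsMatching G M)
    (hmax : ∀ M' : Set (Sym2 V), IsMatching G M' → ¬ supp M ⊂ supp M') :
    IndepMatching G M := by
  refine ⟨hM, ?_⟩
  rintro ⟨s, n, f, ⟨⟨-, hinj, hadj⟩, halt, h1n, hf0, hs, hend⟩, -⟩
  -- parity of path edges
  have hpar : ∀ i : ℕ, ((i:ℕ∞) + 1) < n → (s(f i, f (i+1)) ∈ M ↔ Odd i) := by
    intro i
    induction i with
    | zero =>
      intro _
      constructor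
      · intro hmem
        exact absurd ⟨_, hmem, by rw [← hf0]; simp⟩ hs
      · intro h
        exact absurd h (by decide)
    | succ i ih =>
      intro h
      push_cast at h
      have h2 : ((i:ℕ∞) + 2) < n := by
        rwa [show ((i:ℕ∞)+2) = ((i:ℕ∞)+1)+1 from by rw [add_assoc, one_add_one_eq_two]]
      have h1 : ((i:ℕ∞) + 1) < n := by
        have hstep := enat_lt_succ (i+1)
        push_cast at hstep
        exact lt_trans hstep h
      have halt' := halt i h2
      have hi := ih h1
      show s(f (i+1), f (i+1+1)) ∈ M ↔ Odd (i+1)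
      rw [show i+1+1 = i+2 from rfl, Nat.odd_add_one, ← hi]
      tauto
  -- the new matching
  set P : Set (Sym2 V) := {e | ∃ i : ℕ, ((i:ℕ∞) + 1) < n ∧ e = s(f i, f (i+1))} with hP
  set Q : Set (Sym2 V) := {e | ∃ i : ℕ, ((i:ℕ∞) + 1) < n ∧ Even i ∧ e = s(f i, f (i+1))} with hQ
  set M' : Set (Sym2 V) := (M \ P) ∪ Q with hM'def
  -- key contradiction lemma: a non-path M-edge and a Q-edge can't share a vertex
  have hkey : ∀ v e, e ∈ M → e ∉ P → v ∈ e →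
      ∀ j : ℕ, ((j:ℕ∞) + 1) < n → Even j → v ∈ s(f j, f (j+1)) → False := by
    intro v e heM heP hve j hj hjeven hvj
    rw [Sym2.mem_iff] at hvj
    rcases hvj with rfl | rfl
    · -- v = f j
      rcases Nat.eq_zero_or_pos j with rfl | hpos
      · exact hs ⟨e, heM, by rwa [hf0] at hve⟩
      · obtain ⟨m, rfl⟩ := Nat.exists_eq_succ_of_ne_zero (Nat.pos_iff_ne_zero.mp hpos)
        have hm1 : ((m:ℕ∞) + 1) < n := by
          have := enat_lt_of_succ_lt hj
          push_cast at this ⊢; exact this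
        have hmodd : Odd m := by
          rw [Nat.even_add_one] at hjeven
          exact Nat.not_even_iff_odd.mp hjeven
        have hmem : s(f m, f (m+1)) ∈ M := (hpar m hm1).mpr hmodd
        have : e = s(f m, f (m+1)) :=
          hM.2 (f (m+1)) e heM _ hmem hve (by simp)
        exact heP ⟨m, hm1, this⟩
    · -- v = f (j+1)
      by_cases hlast : n = (((j+1:ℕ)):ℕ∞) + 1
      · exact hend (j+1) hlast ⟨e, heM, hve⟩
      · have hj2 : (((j+1:ℕ)):ℕ∞) + 1 < n :=
          enat_succ_lt_of_lt_ne (by push_cast; exact hj) hlast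
        have hmem : s(f (j+1), f (j+1+1)) ∈ M :=
          (hpar (j+1) hj2).mpr (Even.add_one hjeven)
        have : e = s(f (j+1), f (j+1+1)) :=
          hM.2 (f (j+1)) e heM _ hmem hve (by simp)
        exact heP ⟨j+1, hj2, this⟩
  -- M' is a matching
  have hM'match : IsMatching G M' := by
    constructor
    · rintro e (⟨heM, -⟩ | ⟨i, hi, -, rfl⟩)
      · exact hM.1 heM
      · exact (SimpleGraph.mem_edgeSet G).mpr (hadj i hi)
    · rintro v e (⟨heM, heP⟩ | ⟨i, hi, hie, rfl⟩) e' (⟨heM', heP'⟩ | ⟨j, hj, hje, rfl⟩) hv hv'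
      · exact hM.2 v e heM e' heM' hv hv'
      · exact absurd (hkey v e heM heP hv j hj hje hv') not_false
      · exact absurd (hkey v e' heM' heP' hv' i hi hie hv) not_false
      · -- both Q edges
        rw [Sym2.mem_iff] at hv hv'
        have hi0 : (i:ℕ∞) < n := enat_lt_of_succ_lt hi
        have hi1 : (((i+1:ℕ)):ℕ∞) < n := by push_cast; exact hi
        have hj0 : (j:ℕ∞) < n := enat_lt_of_succ_lt hj
        have hj1 : (((j+1:ℕ)):ℕ∞) < n := by push_cast; exact hj
        have hij : i = j := by
          rcases hv with h1 | h1 <;> rcases hv' with h2 | h2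
          · exact hinj i j hi0 hj0 (h1.symm.trans h2)
          · have := hinj i (j+1) hi0 hj1 (h1.symm.trans h2)
            rw [Nat.even_iff] at hie hje; omega
          · have := hinj (i+1) j hi1 hj0 (h1.symm.trans h2)
            rw [Nat.even_iff] at hie hje; omega
          · have := hinj (i+1) (j+1) hi1 hj1 (h1.symm.trans h2)
            omega
        subst hij; rfl
  -- support strictly increases
  refine hmax M' hM'match ⟨?_, ?_⟩
  · -- supp M ⊆ supp M'
    rintro v ⟨e, heM, hve⟩
    by_cases heP : e ∈ P
    · obtain ⟨i, hi, rfl⟩ := heP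
      have hiodd : Odd i := (hpar i hi).mp heM
      rw [Sym2.mem_iff] at hve
      rcases hve with rfl | rfl
      · obtain ⟨m, rfl⟩ : ∃ m, i = m + 1 := by
          rcases i with _ | m
          · exact absurd hiodd (by decide)
          · exact ⟨m, rfl⟩
        have hm1 : ((m:ℕ∞) + 1) < n := by
          have := enat_lt_of_succ_lt hi; push_cast at this ⊢; exact this
        have hmeven : Even m := Nat.not_odd_iff_even.mp (Nat.odd_add_one.mp hiodd)
        exact ⟨s(f m, f (m+1)), Or.inr ⟨m, hm1, hmeven, rfl⟩, by simp⟩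
      · -- v = f (i+1)
        by_cases hlast : n = (((i+1:ℕ)):ℕ∞) + 1
        · exact absurd ⟨_, heM, by simp⟩ (hend (i+1) hlast)
        · have hi2 : (((i+1:ℕ)):ℕ∞) + 1 < n :=
            enat_succ_lt_of_lt_ne (by push_cast; exact hi) hlast
          exact ⟨s(f (i+1), f (i+1+1)), Or.inr ⟨i+1, hi2, Odd.add_one hiodd, rfl⟩, by simp⟩
    · exact ⟨e, Or.inl ⟨heM, heP⟩, hve⟩
  · -- not supp M' ⊆ supp M
    intro hsub
    have h0 : ((0:ℕ):ℕ∞) + 1 < n := by push_cast; exact h1n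
    have : s ∈ supp M' := ⟨s(f 0, f 1), Or.inr ⟨0, h0, Even.zero, rfl⟩, by rw [← hf0]; simp⟩
    exact hs (hsub this)


end PaperMatchings
end

section
/- Let G be a simple graph on a countable vertex set, and let (M_i)_{i ∈ ℕ} be a chain of independent matchings of G with M_i ⊆ M_{i+1} for all i. Then the union M* = ⋃_{i ∈ ℕ} M_i is an independent matching of G. -/
namespace PaperMatchings

variable {V : Type*}

/-- The union of an increasing chain of independent matchings is an
independent matching. -/
theorem iUnion_chain_indep_matching {V : Type*} [Countable V] (G : SimpleGraph V)
    (M : ℕ → Set (Sym2 V)) (hind : ∀ i : ℕ, IndepMatching G (M i))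
    (hchain : ∀ i : ℕ, M i ⊆ M (i + 1)) :
    IndepMatching G (⋃ i : ℕ, M i) := by
  classical
  set Mu := ⋃ i : ℕ, M i with hMudef
  have hmono : ∀ {a b : ℕ}, a ≤ b → M a ⊆ M b := by
    intro a b hab
    induction hab with
    | refl => exact subset_rfl
    | step h ih => exact ih.trans (hchain _)
  have hsubU : ∀ i : ℕ, M i ⊆ Mu := fun i => Set.subset_iUnion M i
  have hmatchU : IsMatching G Mu := by
    constructor
    · intro e he
      rcases Set.mem_iUnion.mp he with ⟨i, hi⟩
      exact (hind i).1.1 hi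
    · intro v e he e' he' hv hv'
      rcases Set.mem_iUnion.mp he with ⟨a, ha⟩
      rcases Set.mem_iUnion.mp he' with ⟨b, hb⟩
      exact (hind (max a b)).1.2 v e (hmono (le_max_left a b) ha) e'
        (hmono (le_max_right a b) hb) hv hv'
  have hsupp : ∀ i : ℕ, supp (M i) ⊆ supp Mu := by
    rintro i v ⟨e, he, hv⟩
    exact ⟨e, hsubU i he, hv⟩
  refine ⟨hmatchU, ?_⟩
  rintro ⟨s, n, f, ⟨⟨hn1, hinj, hadj⟩, halt, hn2, hf0, hs, hend⟩, j0, hj0n, hj0⟩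
  -- parity lemma: existing edge j of the path is in Mu iff j is odd
  have hpar : ∀ j : ℕ, ((j : ℕ∞) + 1) < n → (s(f j, f (j + 1)) ∈ Mu ↔ Odd j) := by
    intro j
    induction j with
    | zero =>
      intro hj
      have h0 : s(f 0, f 1) ∉ Mu := fun h => hs ⟨s(f 0, f 1), h, hf0 ▸ Sym2.mem_mk_left _ _⟩
      simp [h0]
    | succ j ih =>
      intro hj
      have hj' : ((j : ℕ∞) + 1) < n := by
        refine lt_of_le_of_lt ?_ hj
        have : (j : ℕ∞) ≤ ((j + 1 : ℕ) : ℕ∞) := by exact_mod_cast Nat.cast_le.mpr (Nat.le_succ j)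
        exact add_le_add_left this 1
      have h2 : ((j : ℕ∞) + 2) < n := by
        have : ((j : ℕ∞) + 2) = ((j + 1 : ℕ) : ℕ∞) + 1 := by push_cast; ring
        rw [this]; exact hj
      have halt' := halt j h2
      have hih := ih hj'
      rw [Nat.odd_add_one]
      show s(f (j + 1), f (j + 2)) ∈ Mu ↔ ¬Odd j
      tauto
  -- j0 is odd, hence ≥ 1, hence edge 1 exists and is in Mu
  have hj0odd : Odd j0 := (hpar j0 hj0n).mp hj0
  have hj0ge : 1 ≤ j0 := hj0odd.pos
  have h1lt : ((1 : ℕ) : ℕ∞) + 1 < n := by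
    refine lt_of_le_of_lt ?_ hj0n
    exact add_le_add_left (Nat.cast_le.mpr hj0ge) 1
  have h1mem : s(f 1, f 2) ∈ Mu := (hpar 1 h1lt).mpr odd_one
  obtain ⟨i, hi1⟩ := Set.mem_iUnion.mp h1mem
  -- even edges are never in M i
  have heven : ∀ j : ℕ, Even j → ((j : ℕ∞) + 1) < n → s(f j, f (j + 1)) ∉ M i := by
    intro j hje hjlt hmem
    exact (Nat.not_odd_iff_even.mpr hje) ((hpar j hjlt).mp (hsubU i hmem))
  by_cases hex : ∃ j : ℕ, Odd j ∧ ((j : ℕ∞) + 1) < n ∧ s(f j, f (j + 1)) ∉ M i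
  · -- truncate at the least bad odd index j
    obtain ⟨hjodd, hjlt, hjni⟩ := Nat.find_spec hex
    set j := Nat.find hex with hjdef
    have hmin : ∀ m < j, Odd m → ((m : ℕ∞) + 1) < n → s(f m, f (m + 1)) ∈ M i := by
      intro m hm hmo hmlt
      by_contra hmem
      exact Nat.find_min hex hm ⟨hmo, hmlt, hmem⟩
    have hj1 : j ≠ 1 := by
      intro h; rw [h] at hjni; exact hjni hi1
    have hj3 : 3 ≤ j := by
      rcases hjodd with ⟨m, hm⟩; omega
    -- the truncated path, with j+1 vertices
    have hlt_n : ∀ a : ℕ, a ≤ j → ((a : ℕ∞) + 1) < n := by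
      intro a ha
      refine lt_of_le_of_lt ?_ hjlt
      exact add_le_add_left (Nat.cast_le.mpr ha) 1
    have hcontra : ∃ (s' : V) (n' : ℕ∞) (f' : ℕ → V),
        IsAugmentingPath G (M i) n' f' s' ∧ IsProper (M i) n' f' := by
      refine ⟨s, ((j + 1 : ℕ) : ℕ∞), f, ⟨⟨?_, ?_, ?_⟩, ?_, ?_, hf0, ?_, ?_⟩, 1, ?_, hi1⟩
      · exact_mod_cast Nat.one_le_iff_ne_zero.mpr (Nat.succ_ne_zero j)
      · intro a b ha hb hab
        have ha' : a < j + 1 := by exact_mod_cast ha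
        have hb' : b < j + 1 := by exact_mod_cast hb
        have han : (a : ℕ∞) < n := by
          rcases lt_or_ge (a : ℕ∞) ((j : ℕ∞) + 1) with h | h
          · exact h.trans hjlt
          · exact absurd ha (not_lt.mpr (le_trans (by exact_mod_cast Nat.le_refl (j+1)) h))
        have hbn : (b : ℕ∞) < n := by
          rcases lt_or_ge (b : ℕ∞) ((j : ℕ∞) + 1) with h | h
          · exact h.trans hjlt
          · exact absurd hb (not_lt.mpr (le_trans (by exact_mod_cast Nat.le_refl (j+1)) h))
        exact hinj a b han hbn hab
      · intro a ha
        have ha' : a + 1 < j + 1 := by exact_mod_cast ha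
        exact hadj a (hlt_n a (by omega))
      · intro a ha
        have ha' : a + 2 < j + 1 := by exact_mod_cast ha
        rcases Nat.even_or_odd a with he | ho
        · have h1 : s(f a, f (a + 1)) ∉ M i := heven a he (hlt_n a (by omega))
          have h2 : s(f (a + 1), f (a + 2)) ∈ M i :=
            hmin (a + 1) (by omega) (Even.add_one he) (hlt_n (a + 1) (by omega))
          show s(f a, f (a + 1)) ∈ M i ↔ s(f (a + 1), f (a + 2)) ∉ M i
          tauto
        · have h1 : s(f a, f (a + 1)) ∈ M i := hmin a (by omega) ho (hlt_n a (by omega))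
          have h2 : s(f (a + 1), f (a + 2)) ∉ M i :=
            heven (a + 1) (Odd.add_one ho) (hlt_n (a + 1) (by omega))
          show s(f a, f (a + 1)) ∈ M i ↔ s(f (a + 1), f (a + 2)) ∉ M i
          tauto
      · exact_mod_cast by omega
      · exact fun h => hs (hsupp i h)
      · intro k hk
        have hkj : k = j := by
          have : ((k + 1 : ℕ) : ℕ∞) = ((j + 1 : ℕ) : ℕ∞) := by push_cast; rw [← hk]; push_cast; ring
          have := Nat.cast_inj.mp this
          omega
        rw [hkj]
        rintro ⟨e, he, hv⟩
        have hEj : s(f j, f (j + 1)) ∈ Mu := (hpar j hjlt).mpr hjodd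
        have : e = s(f j, f (j + 1)) :=
          hmatchU.2 (f j) e (hsubU i he) _ hEj hv (Sym2.mem_mk_left _ _)
        rw [this] at he
        exact hjni he
      · exact_mod_cast by omega
    exact (hind i).2 hcontra
  · -- no bad odd index: the whole path is M i-augmenting
    push_neg at hex
    have hcontra : ∃ (s' : V) (n' : ℕ∞) (f' : ℕ → V),
        IsAugmentingPath G (M i) n' f' s' ∧ IsProper (M i) n' f' := by
      refine ⟨s, n, f, ⟨⟨hn1, hinj, hadj⟩, ?_, hn2, hf0, ?_, ?_⟩, 1, h1lt, hi1⟩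
      · intro a ha
        have ha1 : ((a : ℕ∞) + 1) < n := by
          refine lt_of_le_of_lt ?_ ha
          exact add_le_add_right (by exact_mod_cast one_le_two) _
        have ha2 : (((a + 1 : ℕ)) : ℕ∞) + 1 < n := by
          have : (((a + 1 : ℕ)) : ℕ∞) + 1 = (a : ℕ∞) + 2 := by push_cast; ring
          rw [this]; exact ha
        rcases Nat.even_or_odd a with he | ho
        · have h1 : s(f a, f (a + 1)) ∉ M i := heven a he ha1
          have h2 : s(f (a + 1), f (a + 2)) ∈ M i := hex (a + 1) (Even.add_one he) ha2
          show s(f a, f (a + 1)) ∈ M i ↔ s(f (a + 1), f (a + 2)) ∉ M i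
          tauto
        · have h1 : s(f a, f (a + 1)) ∈ M i := hex a ho ha1
          have h2 : s(f (a + 1), f (a + 2)) ∉ M i := heven (a + 1) (Odd.add_one ho) ha2
          show s(f a, f (a + 1)) ∈ M i ↔ s(f (a + 1), f (a + 2)) ∉ M i
          tauto
      · exact fun h => hs (hsupp i h)
      · exact fun k hk h => hend k hk (hsupp i h)
    exact (hind i).2 hcontra

end PaperMatchings
end
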